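/- Let B be a finite set of nonzero generalized polynomial functions on (0,∞)² that is closed under the two operations: (i) a ↦ ∂a/∂y if the least y-exponent β_1 of a is 0, and a ↦ y^{−β_1}·a if β_1 ≠ 0 (applied when a has K > 1 y-terms); and (ii) a ↦ r_a := a − (y/β_K)·∂a/∂y if β_1 = 0 (where β_K is the greatest y-exponent of a), and a ↦ a if β_1 ≠ 0 (applied when K > 1). Let 0 = γ_0 < γ_1 < … < γ_L < γ_{L+1} = ∞ be such that the conclusions of the projection lemma hold for B: for each a ∈ B and each p ∈ {0,…,L}, the zero set of a in H_p := (γ_p,γ_{p+1}) × (0,∞) is the union of graphs of continuous functions ξ_{a,p,1} < … < ξ_{a,p,s(a,p)} : (γ_p,γ_{p+1}) → (0,∞), with the uniform trichotomy: for all a_1, a_2 ∈ B and all valid indices, exactly one of ξ_{a_1,p,j_1} < ξ_{a_2,p,j_2}, =, > holds throughout (γ_p,γ_{p+1}). Then for each p ∈ {0,…,L}, each a ∈ B, and each j ∈ {0,1,…,s(a,p)} (with the convention ξ_{a,p,0} ≡ 0), there exists a function c_{a,p,j} : (0,∞)² → ℝ which is a sup of infs of finitely many generalized polynomial functions and satisfies,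 for all x ∈ (γ_p,γ_{p+1}) and all y ∈ (0,∞): c_{a,p,j}(x,y) = a(x,y) if y > ξ_{a,p,j}(x), and c_{a,p,j}(x,y) = 0 otherwise. -/

import Mathlib

open Set

noncomputable section

/-- A one-variable generalized polynomial function (on `(0,∞)`):
`x ↦ ∑ cᵢ x^{αᵢ}` with nonzero real coefficients and distinct real exponents. -/
def IsGenPoly1 (f : ℝ → ℝ) : Prop :=
  ∃ (m : ℕ) (c : Fin m → ℝ) (α : Fin m → ℝ),
    (∀ i, c i ≠ 0) ∧ Function.Injective α ∧
    ∀ x : ℝ, 0 < x → f x = ∑ i, c i * x ^ α i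

/-- A generalized polynomial function of two variables (values prescribed on the
open positive quadrant): `(x,y) ↦ ∑ cᵢ x^{αᵢ₁} y^{αᵢ₂}` with nonzero real
coefficients and distinct real exponent pairs. -/
def IsGenPoly2 (a : ℝ → ℝ → ℝ) : Prop :=
  ∃ (m : ℕ) (c : Fin m → ℝ) (α : Fin m → ℝ × ℝ),
    (∀ i, c i ≠ 0) ∧ Function.Injective α ∧
    ∀ x y : ℝ, 0 < x → 0 < y → a x y = ∑ i, c i * x ^ (α i).1 * y ^ (α i).2

/-- A basic generalized semialgebraic (semisignomial) subset of `(0,∞)²`. -/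
def IsBasicGSA2 (S : Set (ℝ × ℝ)) : Prop :=
  ∃ (f : ℝ → ℝ → ℝ) (K : ℕ) (g : Fin K → ℝ → ℝ → ℝ),
    IsGenPoly2 f ∧ (∀ k, IsGenPoly2 (g k)) ∧
    S = {q : ℝ × ℝ | 0 < q.1 ∧ 0 < q.2 ∧ f q.1 q.2 = 0 ∧ ∀ k, 0 < g k q.1 q.2}

/-- A generalized semialgebraic subset of `(0,∞)²`: a finite union of basic ones. -/
def IsGSA2 (S : Set (ℝ × ℝ)) : Prop :=
  ∃ (J : ℕ) (T : Fin J → Set (ℝ × ℝ)), (∀ j, IsBasicGSA2 (T j)) ∧ S = ⋃ j, T j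

/-- The `p`-th interval of the subdivision `0 = γ 0 < γ 1 < … < γ L < γ (L+1) = ∞`
of `(0,∞)`: it is `(γ p, γ (p+1))` for `p < L` and `(γ L, ∞)` for `p = L`. -/
def vstrip (γ : ℕ → ℝ) (L p : ℕ) : Set ℝ :=
  if p = L then Set.Ioi (γ p) else Set.Ioo (γ p) (γ (p + 1))

/-- `h` is a pointwise sup of infs of finitely many generalized polynomial
functions (on the open positive quadrant). -/
def IsSupInf2 (h : ℝ → ℝ → ℝ) : Prop :=
  ∃ (J : ℕ) (K : Fin (J + 1) → ℕ)
    (f : (j : Fin (J + 1)) → Fin (K j + 1) → ℝ → ℝ → ℝ),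
    (∀ j k, IsGenPoly2 (f j k)) ∧
    ∀ x y : ℝ, 0 < x → 0 < y → h x y = ⨆ j, ⨅ k, f j k x y

open Filter

/-! ### Finite sup/inf helpers -/

lemma fin_le_sup {n : ℕ} (f : Fin (n+1) → ℝ) (j : Fin (n+1)) : f j ≤ ⨆ i, f i :=
  le_ciSup (Set.finite_range f).bddAbove j

lemma fin_inf_le {n : ℕ} (f : Fin (n+1) → ℝ) (j : Fin (n+1)) : (⨅ i, f i) ≤ f j :=
  ciInf_le (Set.finite_range f).bddBelow j

lemma fin_sup_attained {n : ℕ} (f : Fin (n+1) → ℝ) :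
    ∃ j, (⨆ i, f i) = f j ∧ ∀ i, f i ≤ f j := by
  obtain ⟨j, hj⟩ := Finite.exists_max f
  exact ⟨j, le_antisymm (ciSup_le hj) (fin_le_sup f j), hj⟩

lemma fin_inf_attained {n : ℕ} (f : Fin (n+1) → ℝ) :
    ∃ j, (⨅ i, f i) = f j ∧ ∀ i, f j ≤ f i := by
  obtain ⟨j, hj⟩ := Finite.exists_min f
  exact ⟨j, le_antisymm (fin_inf_le f j) (le_ciInf hj), hj⟩

/-! ### Generalized polynomial closure lemmas -/

/-- Any finite-sum representation (possibly with zero coefficients and repeated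
exponents) gives a generalized polynomial. -/
lemma isGenPoly2_of_repr {a : ℝ → ℝ → ℝ} (m : ℕ) (c : Fin m → ℝ) (α : Fin m → ℝ × ℝ)
    (h : ∀ x y : ℝ, 0 < x → 0 < y → a x y = ∑ i, c i * x ^ (α i).1 * y ^ (α i).2) :
    IsGenPoly2 a := by
  classical
  set T : Finset (ℝ × ℝ) := Finset.image α Finset.univ with hT
  set w : ℝ × ℝ → ℝ := fun p => ∑ i ∈ Finset.univ.filter (fun i => α i = p), c i with hw
  have key : ∀ x y : ℝ, 0 < x → 0 < y →
      a x y = ∑ p ∈ T, w p * x ^ p.1 * y ^ p.2 := by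
    intro x y hx hy
    rw [h x y hx hy]
    rw [← Finset.sum_fiberwise_of_maps_to (g := α) (t := T)
      (fun i _ => Finset.mem_image_of_mem α (Finset.mem_univ i))
      (fun i => c i * x ^ (α i).1 * y ^ (α i).2)]
    refine Finset.sum_congr rfl (fun p _ => ?_)
    rw [hw]; rw [Finset.sum_mul, Finset.sum_mul]
    refine Finset.sum_congr rfl (fun i hi => ?_)
    rcases Finset.mem_filter.mp hi with ⟨_, h2⟩
    rw [h2]
  set S : Finset (ℝ × ℝ) := T.filter (fun p => w p ≠ 0) with hS
  have key2 : ∀ x y : ℝ, 0 < x → 0 < y →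
      a x y = ∑ p ∈ S, w p * x ^ p.1 * y ^ p.2 := by
    intro x y hx hy
    rw [key x y hx hy]
    refine (Finset.sum_subset (Finset.filter_subset _ _) ?_).symm
    intro p _ hp
    have : w p = 0 := by
      by_contra hne
      exact hp (Finset.mem_filter.mpr ⟨‹p ∈ T›, hne⟩)
    rw [this]; ring
  set e : Fin S.card ≃ {p // p ∈ S} := S.equivFin.symm with he
  refine ⟨S.card, fun i => w (e i), fun i => (e i : ℝ × ℝ), fun i => ?_, ?_, ?_⟩
  · have := (e i).2
    exact (Finset.mem_filter.mp this).2
  · intro i j hij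
    apply e.injective
    exact Subtype.ext hij
  · intro x y hx hy
    rw [key2 x y hx hy, ← Finset.sum_coe_sort S (fun p => w p * x ^ p.1 * y ^ p.2)]
    exact (Equiv.sum_comp e (fun p => w (p : ℝ × ℝ) * x ^ (p : ℝ × ℝ).1 * y ^ (p : ℝ × ℝ).2)).symm

lemma isGenPoly2_zero : IsGenPoly2 (fun _ _ => 0) :=
  isGenPoly2_of_repr 0 (fun i => i.elim0) (fun i => i.elim0)
    (by intro x y _ _; simp)

lemma isGenPoly2_add {f g : ℝ → ℝ → ℝ} (hf : IsGenPoly2 f) (hg : IsGenPoly2 g) :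
    IsGenPoly2 (fun x y => f x y + g x y) := by
  obtain ⟨m₁, c₁, α₁, _, _, h₁⟩ := hf
  obtain ⟨m₂, c₂, α₂, _, _, h₂⟩ := hg
  refine isGenPoly2_of_repr (m₁ + m₂) (Fin.append c₁ c₂) (Fin.append α₁ α₂) ?_
  intro x y hx hy
  rw [h₁ x y hx hy, h₂ x y hx hy]
  rw [show (∑ i : Fin (m₁ + m₂), Fin.append c₁ c₂ i * x ^ (Fin.append α₁ α₂ i).1 * y ^ (Fin.append α₁ α₂ i).2)
      = ∑ i : Fin m₁, (Fin.append c₁ c₂ (Fin.castAdd m₂ i) * x ^ (Fin.append α₁ α₂ (Fin.castAdd m₂ i)).1 * y ^ (Fin.append α₁ α₂ (Fin.castAdd m₂ i)).2)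
        + ∑ i : Fin m₂, (Fin.append c₁ c₂ (Fin.natAdd m₁ i) * x ^ (Fin.append α₁ α₂ (Fin.natAdd m₁ i)).1 * y ^ (Fin.append α₁ α₂ (Fin.natAdd m₁ i)).2)
      from Fin.sum_univ_add _]
  congr 1
  · exact Finset.sum_congr rfl (fun i _ => by simp [Fin.append_left])
  · exact Finset.sum_congr rfl (fun i _ => by simp [Fin.append_right])

/-- multiplication by `C * y ^ e`. -/
lemma isGenPoly2_posMul {f : ℝ → ℝ → ℝ} (C e : ℝ) (hf : IsGenPoly2 f) :
    IsGenPoly2 (fun x y => C * y ^ e * f x y) := by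
  obtain ⟨m, c, α, _, _, h⟩ := hf
  refine isGenPoly2_of_repr m (fun i => C * c i) (fun i => ((α i).1, (α i).2 + e)) ?_
  intro x y hx hy
  rw [h x y hx hy, Finset.mul_sum]
  refine Finset.sum_congr rfl (fun i _ => ?_)
  have : y ^ ((α i).2 + e) = y ^ (α i).2 * y ^ e := Real.rpow_add hy _ _
  simp only [this]; ring

lemma isGenPoly2_sum {m : ℕ} (g : Fin m → ℝ → ℝ → ℝ) (hg : ∀ i, IsGenPoly2 (g i)) :
    IsGenPoly2 (fun x y => ∑ i, g i x y) := by
  induction m with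
  | zero => simpa using isGenPoly2_zero
  | succ m ih =>
      have h1 : IsGenPoly2 (fun x y => ∑ i : Fin m, g i.castSucc x y) :=
        ih _ (fun i => hg i.castSucc)
      have := isGenPoly2_add h1 (hg (Fin.last m))
      convert this using 3 with x y
      rw [Fin.sum_univ_castSucc]

/-! ### SupInf closure -/

lemma fin_sup_eq_of {n : ℕ} {f : Fin (n+1) → ℝ} {v : ℝ}
    (h1 : ∀ j, f j ≤ v) (h2 : ∃ j, f j = v) : (⨆ j, f j) = v := by
  obtain ⟨j, hj⟩ := h2
  exact le_antisymm (ciSup_le h1) (hj ▸ fin_le_sup f j)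

lemma fin_inf_eq_of {n : ℕ} {f : Fin (n+1) → ℝ} {v : ℝ}
    (h1 : ∀ j, v ≤ f j) (h2 : ∃ j, f j = v) : (⨅ j, f j) = v := by
  obtain ⟨j, hj⟩ := h2
  exact le_antisymm (hj ▸ fin_inf_le f j) (le_ciInf h1)

lemma fin_inf_pad {K₀ Kb : ℕ} (hle : K₀ ≤ Kb) (g : Fin (K₀+1) → ℝ) :
    (⨅ (k : Fin (Kb+1)), g ⟨min k.1 K₀, Nat.lt_succ_of_le (min_le_right _ _)⟩) = ⨅ k, g k := by
  refine fin_inf_eq_of (fun k => fin_inf_le g _) ?_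
  obtain ⟨k', hk', hall⟩ := fin_inf_attained g
  refine ⟨⟨k'.1, by omega⟩, ?_⟩
  have e : (⟨min k'.1 K₀, Nat.lt_succ_of_le (min_le_right _ _)⟩ : Fin (K₀+1)) = k' :=
    Fin.ext (min_eq_left (by omega))
  rw [e, hk']

lemma isSupInf2_rect {h : ℝ → ℝ → ℝ} :
    IsSupInf2 h ↔ ∃ (J Kb : ℕ) (f : Fin (J+1) → Fin (Kb+1) → ℝ → ℝ → ℝ),
      (∀ j k, IsGenPoly2 (f j k)) ∧
      ∀ x y : ℝ, 0 < x → 0 < y → h x y = ⨆ j, ⨅ k, f j k x y := by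
  constructor
  · rintro ⟨J, K, f, hgp, hval⟩
    classical
    refine ⟨J, Finset.univ.sup K,
      fun j k => f j ⟨min k.1 (K j), Nat.lt_succ_of_le (min_le_right _ _)⟩,
      fun j k => hgp j _, ?_⟩
    intro x y hx hy
    rw [hval x y hx hy]
    exact iSup_congr (fun j =>
      (fin_inf_pad (Finset.le_sup (Finset.mem_univ j)) (fun k => f j k x y)).symm)
  · rintro ⟨J, Kb, f, hgp, hval⟩; exact ⟨J, fun _ => Kb, f, hgp, hval⟩

lemma isSupInf2_of_genPoly {f : ℝ → ℝ → ℝ} (hf : IsGenPoly2 f) : IsSupInf2 f := by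
  refine ⟨0, fun _ => 0, fun _ _ => f, fun _ _ => hf, ?_⟩
  intro x y _ _
  simp

/-! pair encoding of `Fin (J₁+1) × Fin (J₂+1)` into `Fin (J₁*(J₂+1)+J₂+1)` -/

lemma isSupInf2_zero : IsSupInf2 (fun _ _ => 0) := isSupInf2_of_genPoly isGenPoly2_zero

/-! pair encoding of `Fin (J₁+1) × Fin (J₂+1)` into `Fin (J₁*(J₂+1)+J₂+1)` -/

def pfst {J₁ J₂ : ℕ} (j : Fin (J₁*(J₂+1)+J₂+1)) : Fin (J₁+1) :=
  ⟨j.1/(J₂+1), by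
    apply (Nat.div_lt_iff_lt_mul (Nat.succ_pos J₂)).mpr
    have e : (J₁+1)*(J₂+1) = J₁*(J₂+1)+J₂+1 := by ring
    rw [e]; exact j.isLt⟩

def psnd {J₁ J₂ : ℕ} (j : Fin (J₁*(J₂+1)+J₂+1)) : Fin (J₂+1) :=
  ⟨j.1 % (J₂+1), Nat.mod_lt _ (Nat.succ_pos _)⟩

def penc {J₁ J₂ : ℕ} (j₁ : Fin (J₁+1)) (j₂ : Fin (J₂+1)) : Fin (J₁*(J₂+1)+J₂+1) :=
  ⟨j₂.1 + j₁.1*(J₂+1), by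
    have h1 : j₁.1*(J₂+1) ≤ J₁*(J₂+1) := Nat.mul_le_mul_right _ (Fin.is_le j₁)
    have h2 : j₂.1 ≤ J₂ := Fin.is_le j₂
    omega⟩

lemma pfst_enc {J₁ J₂ : ℕ} (j₁ : Fin (J₁+1)) (j₂ : Fin (J₂+1)) : pfst (penc j₁ j₂) = j₁ := by
  apply Fin.ext
  show (j₂.1 + j₁.1*(J₂+1)) / (J₂+1) = j₁.1
  rw [Nat.add_mul_div_right _ _ (Nat.succ_pos J₂), Nat.div_eq_of_lt j₂.isLt, Nat.zero_add]

lemma psnd_enc {J₁ J₂ : ℕ} (j₁ : Fin (J₁+1)) (j₂ : Fin (J₂+1)) : psnd (penc j₁ j₂) = j₂ := by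
  apply Fin.ext
  show (j₂.1 + j₁.1*(J₂+1)) % (J₂+1) = j₂.1
  rw [Nat.add_mul_mod_self_right, Nat.mod_eq_of_lt j₂.isLt]

lemma fin_sup_pair_eq {J₁ J₂ : ℕ} {C : Fin (J₁+1) → Fin (J₂+1) → ℝ} {v : ℝ}
    (h1 : ∀ j₁ j₂, C j₁ j₂ ≤ v) (h2 : ∃ j₁ j₂, C j₁ j₂ = v) :
    (⨆ j : Fin (J₁*(J₂+1)+J₂+1), C (pfst j) (psnd j)) = v := by
  obtain ⟨j₁, j₂, hj⟩ := h2
  exact fin_sup_eq_of (fun j => h1 _ _) ⟨penc j₁ j₂, by rw [pfst_enc, psnd_enc, hj]⟩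

lemma fin_inf_pair_eq {J₁ J₂ : ℕ} {C : Fin (J₁+1) → Fin (J₂+1) → ℝ} {v : ℝ}
    (h1 : ∀ j₁ j₂, v ≤ C j₁ j₂) (h2 : ∃ j₁ j₂, C j₁ j₂ = v) :
    (⨅ j : Fin (J₁*(J₂+1)+J₂+1), C (pfst j) (psnd j)) = v := by
  obtain ⟨j₁, j₂, hj⟩ := h2
  exact fin_inf_eq_of (fun j => h1 _ _) ⟨penc j₁ j₂, by rw [pfst_enc, psnd_enc, hj]⟩

/-! block (sum) encoding -/

def bdec {α : Type*} {K₁ K₂ : ℕ} (A : Fin (K₁+1) → α) (B : Fin (K₂+1) → α)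
    (k : Fin (K₁+K₂+1+1)) : α :=
  if hk : k.1 < K₁+1 then A ⟨k.1, hk⟩ else B ⟨k.1-(K₁+1), by omega⟩

lemma bdec_left {α : Type*} {K₁ K₂ : ℕ} (A : Fin (K₁+1) → α) (B : Fin (K₂+1) → α)
    (k : Fin (K₁+1)) : bdec A B ⟨k.1, by omega⟩ = A k := by
  have hk : (⟨k.1, by omega⟩ : Fin (K₁+K₂+1+1)).1 < K₁+1 := k.isLt
  rw [bdec, dif_pos hk]

lemma bdec_right {α : Type*} {K₁ K₂ : ℕ} (A : Fin (K₁+1) → α) (B : Fin (K₂+1) → α)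
    (k : Fin (K₂+1)) : bdec A B ⟨K₁+1+k.1, by omega⟩ = B k := by
  have hk : ¬ ((⟨K₁+1+k.1, by omega⟩ : Fin (K₁+K₂+1+1)).1 < K₁+1) := by simp; omega
  rw [bdec, dif_neg hk]
  congr 1
  exact Fin.ext (by simp)

lemma fin_inf_bdec {K₁ K₂ : ℕ} (A : Fin (K₁+1) → ℝ) (B : Fin (K₂+1) → ℝ) :
    (⨅ k, bdec A B k) = min (⨅ k, A k) (⨅ k, B k) := by
  refine fin_inf_eq_of ?_ ?_
  · intro k
    rw [bdec]
    by_cases hk : k.1 < K₁+1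
    · rw [dif_pos hk]
      exact le_trans (min_le_left _ _) (fin_inf_le A _)
    · rw [dif_neg hk]
      exact le_trans (min_le_right _ _) (fin_inf_le B _)
  · rcases min_cases (⨅ k, A k) (⨅ k, B k) with ⟨he, _⟩ | ⟨he, _⟩ <;> rw [he]
    · obtain ⟨k₁, hk₁, _⟩ := fin_inf_attained A
      exact ⟨⟨k₁.1, by omega⟩, by rw [bdec_left, hk₁]⟩
    · obtain ⟨k₂, hk₂, _⟩ := fin_inf_attained B
      exact ⟨⟨K₁+1+k₂.1, by omega⟩, by rw [bdec_right, hk₂]⟩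

lemma fin_sup_bdec {K₁ K₂ : ℕ} (A : Fin (K₁+1) → ℝ) (B : Fin (K₂+1) → ℝ) :
    (⨆ k, bdec A B k) = max (⨆ k, A k) (⨆ k, B k) := by
  refine fin_sup_eq_of ?_ ?_
  · intro k
    rw [bdec]
    by_cases hk : k.1 < K₁+1
    · rw [dif_pos hk]
      exact le_trans (fin_le_sup A _) (le_max_left _ _)
    · rw [dif_neg hk]
      exact le_trans (fin_le_sup B _) (le_max_right _ _)
  · rcases max_cases (⨆ k, A k) (⨆ k, B k) with ⟨he, _⟩ | ⟨he, _⟩ <;> rw [he]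
    · obtain ⟨k₁, hk₁, _⟩ := fin_sup_attained A
      exact ⟨⟨k₁.1, by omega⟩, by rw [bdec_left, hk₁]⟩
    · obtain ⟨k₂, hk₂, _⟩ := fin_sup_attained B
      exact ⟨⟨K₁+1+k₂.1, by omega⟩, by rw [bdec_right, hk₂]⟩

/-! the closure lemmas -/

lemma isSupInf2_max {h₁ h₂ : ℝ → ℝ → ℝ} (H₁ : IsSupInf2 h₁) (H₂ : IsSupInf2 h₂) :
    IsSupInf2 (fun x y => max (h₁ x y) (h₂ x y)) := by
  rw [isSupInf2_rect] at H₁ H₂ ⊢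
  obtain ⟨J₁, K₁, f₁, hg₁, hv₁⟩ := H₁
  obtain ⟨J₂, K₂, f₂, hg₂, hv₂⟩ := H₂
  refine ⟨J₁+J₂+1, K₁*(K₂+1)+K₂, fun j k =>
    bdec (fun j' => f₁ j' (pfst k)) (fun j' => f₂ j' (psnd k)) j, ?_, ?_⟩
  · intro j k
    simp only [bdec]
    by_cases hj : j.1 < J₁+1
    · rw [dif_pos hj]; exact hg₁ _ _
    · rw [dif_neg hj]; exact hg₂ _ _
  · intro x y hx hy
    simp only
    rw [hv₁ x y hx hy, hv₂ x y hx hy]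
    rw [← fin_sup_bdec (fun j' => ⨅ k, f₁ j' k x y) (fun j' => ⨅ k, f₂ j' k x y)]
    refine (iSup_congr (fun j => ?_)).symm
    simp only [bdec]
    by_cases hj : j.1 < J₁+1
    · simp only [dif_pos hj]
      refine fin_inf_pair_eq (J₁ := K₁) (J₂ := K₂) (C := fun k₁ _ => f₁ ⟨j.1, hj⟩ k₁ x y) ?_ ?_
      · intro k₁ _; exact fin_inf_le (fun k => f₁ ⟨j.1, hj⟩ k x y) k₁
      · obtain ⟨k₁, hk₁, _⟩ := fin_inf_attained (fun k => f₁ ⟨j.1, hj⟩ k x y)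
        exact ⟨k₁, ⟨0, Nat.succ_pos _⟩, hk₁.symm⟩
    · simp only [dif_neg hj]
      refine fin_inf_pair_eq (J₁ := K₁) (J₂ := K₂) (C := fun _ k₂ => f₂ ⟨j.1-(J₁+1), by omega⟩ k₂ x y) ?_ ?_
      · intro _ k₂; exact fin_inf_le (fun k => f₂ ⟨j.1-(J₁+1), by omega⟩ k x y) k₂
      · obtain ⟨k₂, hk₂, _⟩ := fin_inf_attained (fun k => f₂ ⟨j.1-(J₁+1), by omega⟩ k x y)
        exact ⟨⟨0, Nat.succ_pos _⟩, k₂, hk₂.symm⟩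

lemma isSupInf2_min {h₁ h₂ : ℝ → ℝ → ℝ} (H₁ : IsSupInf2 h₁) (H₂ : IsSupInf2 h₂) :
    IsSupInf2 (fun x y => min (h₁ x y) (h₂ x y)) := by
  rw [isSupInf2_rect] at H₁ H₂ ⊢
  obtain ⟨J₁, K₁, f₁, hg₁, hv₁⟩ := H₁
  obtain ⟨J₂, K₂, f₂, hg₂, hv₂⟩ := H₂
  refine ⟨J₁*(J₂+1)+J₂, K₁+K₂+1, fun j k =>
    bdec (fun k' => f₁ (pfst j) k') (fun k' => f₂ (psnd j) k') k, ?_, ?_⟩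
  · intro j k
    simp only [bdec]
    by_cases hk : k.1 < K₁+1
    · rw [dif_pos hk]; exact hg₁ _ _
    · rw [dif_neg hk]; exact hg₂ _ _
  · intro x y hx hy
    simp only
    rw [hv₁ x y hx hy, hv₂ x y hx hy]
    have rows : ∀ j : Fin (J₁*(J₂+1)+J₂+1),
        (⨅ k, bdec (fun k' => f₁ (pfst j) k') (fun k' => f₂ (psnd j) k') k x y)
          = min (⨅ k, f₁ (pfst j) k x y) (⨅ k, f₂ (psnd j) k x y) := by
      intro j
      rw [← fin_inf_bdec (fun k' => f₁ (pfst j) k' x y) (fun k' => f₂ (psnd j) k' x y)]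
      refine iInf_congr (fun k => ?_)
      simp only [bdec]
      by_cases hk : k.1 < K₁+1
      · rw [dif_pos hk, dif_pos hk]
      · rw [dif_neg hk, dif_neg hk]
    refine (Eq.trans (iSup_congr rows) ?_).symm
    refine fin_sup_pair_eq (J₁ := J₁) (J₂ := J₂)
      (C := fun j₁ j₂ => min (⨅ k, f₁ j₁ k x y) (⨅ k, f₂ j₂ k x y)) ?_ ?_
    · intro j₁ j₂
      exact min_le_min (fin_le_sup (fun j => ⨅ k, f₁ j k x y) j₁)
        (fin_le_sup (fun j => ⨅ k, f₂ j k x y) j₂)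
    · obtain ⟨j₁, hj₁, _⟩ := fin_sup_attained (fun j => ⨅ k, f₁ j k x y)
      obtain ⟨j₂, hj₂, _⟩ := fin_sup_attained (fun j => ⨅ k, f₂ j k x y)
      exact ⟨j₁, j₂, by show min _ _ = _; rw [← hj₁, ← hj₂]⟩

lemma isSupInf2_add {h₁ h₂ : ℝ → ℝ → ℝ} (H₁ : IsSupInf2 h₁) (H₂ : IsSupInf2 h₂) :
    IsSupInf2 (fun x y => h₁ x y + h₂ x y) := by
  rw [isSupInf2_rect] at H₁ H₂ ⊢
  obtain ⟨J₁, K₁, f₁, hg₁, hv₁⟩ := H₁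
  obtain ⟨J₂, K₂, f₂, hg₂, hv₂⟩ := H₂
  refine ⟨J₁*(J₂+1)+J₂, K₁*(K₂+1)+K₂, fun j k =>
    fun x y => f₁ (pfst j) (pfst k) x y + f₂ (psnd j) (psnd k) x y, ?_, ?_⟩
  · intro j k
    exact isGenPoly2_add (hg₁ _ _) (hg₂ _ _)
  · intro x y hx hy
    simp only
    rw [hv₁ x y hx hy, hv₂ x y hx hy]
    have rows : ∀ j : Fin (J₁*(J₂+1)+J₂+1),
        (⨅ k : Fin (K₁*(K₂+1)+K₂+1), f₁ (pfst j) (pfst k) x y + f₂ (psnd j) (psnd k) x y)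
          = (⨅ k, f₁ (pfst j) k x y) + (⨅ k, f₂ (psnd j) k x y) := by
      intro j
      refine fin_inf_pair_eq (J₁ := K₁) (J₂ := K₂)
        (C := fun k₁ k₂ => f₁ (pfst j) k₁ x y + f₂ (psnd j) k₂ x y) ?_ ?_
      · intro k₁ k₂
        exact add_le_add (fin_inf_le _ k₁) (fin_inf_le _ k₂)
      · obtain ⟨k₁, hk₁, _⟩ := fin_inf_attained (fun k => f₁ (pfst j) k x y)
        obtain ⟨k₂, hk₂, _⟩ := fin_inf_attained (fun k => f₂ (psnd j) k x y)
        exact ⟨k₁, k₂, by show f₁ (pfst j) k₁ x y + f₂ (psnd j) k₂ x y = _; rw [← hk₁, ← hk₂]⟩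
    refine (Eq.trans (iSup_congr rows) ?_).symm
    refine fin_sup_pair_eq (J₁ := J₁) (J₂ := J₂)
      (C := fun j₁ j₂ => (⨅ k, f₁ j₁ k x y) + (⨅ k, f₂ j₂ k x y)) ?_ ?_
    · intro j₁ j₂
      exact add_le_add (fin_le_sup (fun j => ⨅ k, f₁ j k x y) j₁)
        (fin_le_sup (fun j => ⨅ k, f₂ j k x y) j₂)
    · obtain ⟨j₁, hj₁, _⟩ := fin_sup_attained (fun j => ⨅ k, f₁ j k x y)
      obtain ⟨j₂, hj₂, _⟩ := fin_sup_attained (fun j => ⨅ k, f₂ j k x y)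
      exact ⟨j₁, j₂, by show (⨅ k, f₁ j₁ k x y) + (⨅ k, f₂ j₂ k x y) = _; rw [← hj₁, ← hj₂]⟩

lemma isSupInf2_posMul {h : ℝ → ℝ → ℝ} (C e : ℝ) (hC : 0 ≤ C) (H : IsSupInf2 h) :
    IsSupInf2 (fun x y => C * y ^ e * h x y) := by
  rw [isSupInf2_rect] at H ⊢
  obtain ⟨J, Kb, f, hg, hv⟩ := H
  refine ⟨J, Kb, fun j k => fun x y => C * y ^ e * f j k x y,
    fun j k => isGenPoly2_posMul C e (hg j k), ?_⟩
  intro x y hx hy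
  simp only
  rw [hv x y hx hy]
  have hcy : 0 ≤ C * y ^ e := mul_nonneg hC (le_of_lt (Real.rpow_pos_of_pos hy e))
  have rows : ∀ j, (⨅ k, C * y ^ e * f j k x y) = C * y ^ e * ⨅ k, f j k x y := by
    intro j
    refine fin_inf_eq_of ?_ ?_
    · intro k
      exact mul_le_mul_of_nonneg_left (fin_inf_le _ k) hcy
    · obtain ⟨k₀, hk₀, _⟩ := fin_inf_attained (fun k => f j k x y)
      exact ⟨k₀, by rw [← hk₀]⟩
  refine (Eq.trans (iSup_congr rows) ?_).symm
  refine fin_sup_eq_of ?_ ?_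
  · intro j
    exact mul_le_mul_of_nonneg_left (fin_le_sup (fun j => ⨅ k, f j k x y) j) hcy
  · obtain ⟨j₀, hj₀, _⟩ := fin_sup_attained (fun j => ⨅ k, f j k x y)
    exact ⟨j₀, by rw [← hj₀]⟩

/-! ### Uniqueness of Dirichlet-type expansions -/

lemma dirichlet_aux : ∀ (m : ℕ) (c e : Fin m → ℝ), Function.Injective e →
    (∀ y : ℝ, 0 < y → ∑ i, c i * y ^ e i = 0) → ∀ i, c i = 0 := by
  intro m
  induction m with
  | zero => intro c e _ _ i; exact i.elim0
  | succ m ih =>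
    intro c e he hsum
    obtain ⟨i₀, hi₀⟩ := Finite.exists_max e
    have hc0 : c i₀ = 0 := by
      have hterm : ∀ i : Fin (m+1), Tendsto (fun y : ℝ => c i * y ^ (e i - e i₀)) atTop
          (nhds (if i = i₀ then c i else 0)) := by
        intro i
        by_cases hii : i = i₀
        · subst hii
          rw [if_pos rfl, sub_self]
          refine Tendsto.congr' ?_ tendsto_const_nhds
          filter_upwards [eventually_gt_atTop (0:ℝ)] with y hy
          rw [Real.rpow_zero, mul_one]
        · rw [if_neg hii]
          have hlt : e i < e i₀ := lt_of_le_of_ne (hi₀ i) (fun h => hii (he h))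
          have h1 : Tendsto (fun y : ℝ => y ^ (e i - e i₀)) atTop (nhds 0) := by
            have h2 := tendsto_rpow_neg_atTop (y := e i₀ - e i) (by linarith)
            have h3 : (fun y : ℝ => y ^ (-(e i₀ - e i))) = fun y : ℝ => y ^ (e i - e i₀) := by
              funext y; ring_nf
            rwa [h3] at h2
          have := h1.const_mul (c i)
          simpa using this
      have hlim : Tendsto (fun y : ℝ => ∑ i, c i * y ^ (e i - e i₀)) atTop (nhds (c i₀)) := by
        have hs := tendsto_finset_sum Finset.univ (fun i (_ : i ∈ Finset.univ) => hterm i)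
        have : (∑ i, if i = i₀ then c i else 0) = c i₀ := by
          rw [Finset.sum_ite_eq' Finset.univ i₀ c]
          simp
        rwa [this] at hs
      have hzero : (fun y : ℝ => ∑ i, c i * y ^ (e i - e i₀)) =ᶠ[atTop] (fun _ => (0:ℝ)) := by
        filter_upwards [eventually_gt_atTop (0:ℝ)] with y hy
        have hrw : ∑ i, c i * y ^ (e i - e i₀) = (∑ i, c i * y ^ e i) * y ^ (-e i₀) := by
          rw [Finset.sum_mul]
          refine Finset.sum_congr rfl (fun i _ => ?_)
          rw [mul_assoc, ← Real.rpow_add hy, sub_eq_add_neg]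
        rw [hrw, hsum y hy, zero_mul]
      exact tendsto_nhds_unique (hlim.congr' hzero) tendsto_const_nhds
    intro i
    by_cases hii : i = i₀
    · rw [hii]; exact hc0
    · obtain ⟨j, hj⟩ := Fin.exists_succAbove_eq hii
      have hsum' : ∀ y : ℝ, 0 < y →
          ∑ i' : Fin m, c (i₀.succAbove i') * y ^ e (i₀.succAbove i') = 0 := by
        intro y hy
        have := hsum y hy
        rw [Fin.sum_univ_succAbove (fun i' => c i' * y ^ e i') i₀, hc0, zero_mul, zero_add] at this
        exact this
      have hinj : Function.Injective (fun i' => e (i₀.succAbove i')) :=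
        he.comp (Fin.succAbove_right_injective)
      have := ih (fun i' => c (i₀.succAbove i')) (fun i' => e (i₀.succAbove i')) hinj hsum' j
      rwa [hj] at this

lemma dirichlet_finset (E : Finset ℝ) (w : ℝ → ℝ)
    (h : ∀ y : ℝ, 0 < y → ∑ t ∈ E, w t * y ^ t = 0) : ∀ t ∈ E, w t = 0 := by
  classical
  set e : Fin E.card ≃ {t // t ∈ E} := E.equivFin.symm with he
  have hinj : Function.Injective (fun i => ((e i : {t // t ∈ E}) : ℝ)) := by
    intro i j hij
    exact e.injective (Subtype.ext hij)
  have key := dirichlet_aux E.card (fun i => w (e i)) (fun i => ((e i : {t // t ∈ E}) : ℝ))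
    hinj ?_
  · intro t ht
    have := key (e.symm ⟨t, ht⟩)
    simpa using this
  · intro y hy
    rw [← h y hy, ← Finset.sum_coe_sort E (fun t => w t * y ^ t)]
    exact Equiv.sum_comp e (fun t : {t // t ∈ E} => w (t : ℝ) * y ^ (t : ℝ))

/-- Comparison of exponent sets of two representations of the same function. -/
lemma repr_exponents {K₁ K₂ : ℕ} {b₁ : Fin K₁ → ℝ → ℝ} {β₁ : Fin K₁ → ℝ}
    {b₂ : Fin K₂ → ℝ → ℝ} {β₂ : Fin K₂ → ℝ}
    (hβ₁ : Function.Injective β₁) (hβ₂ : Function.Injective β₂)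
    (hnz₁ : ∀ i, ∃ x : ℝ, 0 < x ∧ b₁ i x ≠ 0) (hnz₂ : ∀ i, ∃ x : ℝ, 0 < x ∧ b₂ i x ≠ 0)
    (heq : ∀ x y : ℝ, 0 < x → 0 < y →
      ∑ i, b₁ i x * y ^ β₁ i = ∑ i, b₂ i x * y ^ β₂ i) :
    Finset.image β₁ Finset.univ = Finset.image β₂ Finset.univ := by
  classical
  set E : Finset ℝ := Finset.image β₁ Finset.univ ∪ Finset.image β₂ Finset.univ with hE
  have key : ∀ x : ℝ, 0 < x → ∀ t ∈ E,
      (∑ i ∈ Finset.univ.filter (fun i => β₁ i = t), b₁ i x)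
        - (∑ j ∈ Finset.univ.filter (fun j => β₂ j = t), b₂ j x) = 0 := by
    intro x hx
    refine dirichlet_finset E _ ?_
    intro y hy
    have h₁ : ∑ t ∈ E, (∑ i ∈ Finset.univ.filter (fun i => β₁ i = t), b₁ i x) * y ^ t
        = ∑ i, b₁ i x * y ^ β₁ i := by
      rw [← Finset.sum_fiberwise_of_maps_to (g := β₁) (t := E)
        (fun i _ => Finset.mem_union_left _ (Finset.mem_image_of_mem β₁ (Finset.mem_univ i)))
        (fun i => b₁ i x * y ^ β₁ i)]
      refine Finset.sum_congr rfl (fun t _ => ?_)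
      rw [Finset.sum_mul]
      refine Finset.sum_congr rfl (fun i hi => ?_)
      rw [(Finset.mem_filter.mp hi).2]
    have h₂ : ∑ t ∈ E, (∑ j ∈ Finset.univ.filter (fun j => β₂ j = t), b₂ j x) * y ^ t
        = ∑ j, b₂ j x * y ^ β₂ j := by
      rw [← Finset.sum_fiberwise_of_maps_to (g := β₂) (t := E)
        (fun j _ => Finset.mem_union_right _ (Finset.mem_image_of_mem β₂ (Finset.mem_univ j)))
        (fun j => b₂ j x * y ^ β₂ j)]
      refine Finset.sum_congr rfl (fun t _ => ?_)
      rw [Finset.sum_mul]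
      refine Finset.sum_congr rfl (fun j hj => ?_)
      rw [(Finset.mem_filter.mp hj).2]
    calc ∑ t ∈ E, ((∑ i ∈ Finset.univ.filter (fun i => β₁ i = t), b₁ i x)
            - (∑ j ∈ Finset.univ.filter (fun j => β₂ j = t), b₂ j x)) * y ^ t
        = (∑ t ∈ E, (∑ i ∈ Finset.univ.filter (fun i => β₁ i = t), b₁ i x) * y ^ t)
          - ∑ t ∈ E, (∑ j ∈ Finset.univ.filter (fun j => β₂ j = t), b₂ j x) * y ^ t := by
          rw [← Finset.sum_sub_distrib]
          refine Finset.sum_congr rfl (fun t _ => ?_)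
          ring
      _ = 0 := by rw [h₁, h₂, heq x y hx hy, sub_self]
  have main : ∀ (i : Fin K₁), β₁ i ∈ Finset.image β₂ Finset.univ := by
    intro i
    by_contra hni
    obtain ⟨x, hx, hbx⟩ := hnz₁ i
    have hmem : β₁ i ∈ E := Finset.mem_union_left _ (Finset.mem_image_of_mem β₁ (Finset.mem_univ i))
    have h0 := key x hx (β₁ i) hmem
    have e₁ : Finset.univ.filter (fun i' => β₁ i' = β₁ i) = {i} := by
      ext i'
      simp only [Finset.mem_filter, Finset.mem_univ, true_and, Finset.mem_singleton]
      exact ⟨fun h => hβ₁ h, fun h => by rw [h]⟩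
    have e₂ : Finset.univ.filter (fun j => β₂ j = β₁ i) = ∅ := by
      rw [Finset.filter_eq_empty_iff]
      intro j _
      intro hj
      exact hni (hj ▸ Finset.mem_image_of_mem β₂ (Finset.mem_univ j))
    rw [e₁, e₂, Finset.sum_singleton, Finset.sum_empty, sub_zero] at h0
    exact hbx h0
  have main' : ∀ (j : Fin K₂), β₂ j ∈ Finset.image β₁ Finset.univ := by
    intro j
    by_contra hnj
    obtain ⟨x, hx, hbx⟩ := hnz₂ j
    have hmem : β₂ j ∈ E := Finset.mem_union_right _ (Finset.mem_image_of_mem β₂ (Finset.mem_univ j))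
    have h0 := key x hx (β₂ j) hmem
    have e₂ : Finset.univ.filter (fun j' => β₂ j' = β₂ j) = {j} := by
      ext j'
      simp only [Finset.mem_filter, Finset.mem_univ, true_and, Finset.mem_singleton]
      exact ⟨fun h => hβ₂ h, fun h => by rw [h]⟩
    have e₁ : Finset.univ.filter (fun i => β₁ i = β₂ j) = ∅ := by
      rw [Finset.filter_eq_empty_iff]
      intro i _
      intro hi
      exact hnj (hi ▸ Finset.mem_image_of_mem β₁ (Finset.mem_univ i))
    rw [e₁, e₂, Finset.sum_singleton, Finset.sum_empty, zero_sub, neg_eq_zero] at h0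
    exact hbx h0
  apply Finset.Subset.antisymm
  · intro t ht
    obtain ⟨i, _, rfl⟩ := Finset.mem_image.mp ht
    exact main i
  · intro t ht
    obtain ⟨j, _, rfl⟩ := Finset.mem_image.mp ht
    exact main' j

lemma repr_card {K₁ K₂ : ℕ} {b₁ : Fin K₁ → ℝ → ℝ} {β₁ : Fin K₁ → ℝ}
    {b₂ : Fin K₂ → ℝ → ℝ} {β₂ : Fin K₂ → ℝ}
    (hβ₁ : Function.Injective β₁) (hβ₂ : Function.Injective β₂)
    (hnz₁ : ∀ i, ∃ x : ℝ, 0 < x ∧ b₁ i x ≠ 0) (hnz₂ : ∀ i, ∃ x : ℝ, 0 < x ∧ b₂ i x ≠ 0)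
    (heq : ∀ x y : ℝ, 0 < x → 0 < y →
      ∑ i, b₁ i x * y ^ β₁ i = ∑ i, b₂ i x * y ^ β₂ i) : K₁ = K₂ := by
  have h := repr_exponents hβ₁ hβ₂ hnz₁ hnz₂ heq
  have c₁ : (Finset.image β₁ Finset.univ).card = K₁ := by
    rw [Finset.card_image_of_injective _ hβ₁, Finset.card_univ, Fintype.card_fin]
  have c₂ : (Finset.image β₂ Finset.univ).card = K₂ := by
    rw [Finset.card_image_of_injective _ hβ₂, Finset.card_univ, Fintype.card_fin]
  rw [← c₁, ← c₂, h]

/-! ### smallest exponent -/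

lemma min_exponent_eq {K₁ K₂ : ℕ} (h₁ : 0 < K₁) (h₂ : 0 < K₂) (β₁ : Fin K₁ → ℝ)
    (β₂ : Fin K₂ → ℝ) (hm₁ : StrictMono β₁) (hm₂ : StrictMono β₂)
    (him : Finset.image β₁ Finset.univ = Finset.image β₂ Finset.univ) :
    β₁ ⟨0, h₁⟩ = β₂ ⟨0, h₂⟩ := by
  have hmem₁ : β₁ ⟨0, h₁⟩ ∈ Finset.image β₂ Finset.univ := by
    rw [← him]; exact Finset.mem_image_of_mem β₁ (Finset.mem_univ _)
  have hmem₂ : β₂ ⟨0, h₂⟩ ∈ Finset.image β₁ Finset.univ := by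
    rw [him]; exact Finset.mem_image_of_mem β₂ (Finset.mem_univ _)
  obtain ⟨j, _, hj⟩ := Finset.mem_image.mp hmem₁
  obtain ⟨i, _, hi⟩ := Finset.mem_image.mp hmem₂
  have l₁ : β₂ ⟨0, h₂⟩ ≤ β₁ ⟨0, h₁⟩ := by
    rw [← hj]; exact hm₂.monotone (by simp [Fin.le_def])
  have l₂ : β₁ ⟨0, h₁⟩ ≤ β₂ ⟨0, h₂⟩ := by
    rw [← hi]; exact hm₁.monotone (by simp [Fin.le_def])
  linarith

/-! ### continuity and derivatives -/

lemma IsGenPoly1.continuousOn_pos {f : ℝ → ℝ}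
    (hf : ∃ (m : ℕ) (c : Fin m → ℝ) (α : Fin m → ℝ),
      (∀ i, c i ≠ 0) ∧ Function.Injective α ∧
      ∀ x : ℝ, 0 < x → f x = ∑ i, c i * x ^ α i) :
    ContinuousOn f (Set.Ioi (0:ℝ)) := by
  obtain ⟨m, c, α, _, _, hrepr⟩ := hf
  have hcont : ContinuousOn (fun x : ℝ => ∑ i, c i * x ^ α i) (Set.Ioi (0:ℝ)) := by
    apply continuousOn_finset_sum
    intro i _
    exact continuousOn_const.mul (fun x hx =>
      (Real.continuousAt_rpow_const x (α i) (Or.inl (ne_of_gt hx))).continuousWithinAt)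
  exact hcont.congr (fun x hx => hrepr x hx)

lemma continuousOn_quad {a : ℝ → ℝ → ℝ} {K : ℕ} {b : Fin K → ℝ → ℝ} {β : Fin K → ℝ}
    (hb : ∀ i, ContinuousOn (b i) (Set.Ioi (0:ℝ)))
    (hrepr : ∀ x y : ℝ, 0 < x → 0 < y → a x y = ∑ i, b i x * y ^ β i) :
    ContinuousOn (fun q : ℝ × ℝ => a q.1 q.2) (Set.Ioi (0:ℝ) ×ˢ Set.Ioi (0:ℝ)) := by
  have hcont : ContinuousOn (fun q : ℝ × ℝ => ∑ i, b i q.1 * q.2 ^ β i)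
      (Set.Ioi (0:ℝ) ×ˢ Set.Ioi (0:ℝ)) := by
    apply continuousOn_finset_sum
    intro i _
    have h1 : ContinuousOn (fun q : ℝ × ℝ => b i q.1) (Set.Ioi (0:ℝ) ×ˢ Set.Ioi (0:ℝ)) :=
      (hb i).comp continuous_fst.continuousOn (fun q hq => (Set.mem_prod.mp hq).1)
    have h2 : ContinuousOn (fun q : ℝ × ℝ => q.2 ^ β i) (Set.Ioi (0:ℝ) ×ˢ Set.Ioi (0:ℝ)) := by
      refine ContinuousOn.comp (f := fun q : ℝ × ℝ => q.2) (g := fun t : ℝ => t ^ β i)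
        ?_ continuous_snd.continuousOn (fun q hq => (Set.mem_prod.mp hq).2)
      exact fun t ht => (Real.continuousAt_rpow_const t (β i)
        (Or.inl (ne_of_gt ht))).continuousWithinAt
    exact h1.mul h2
  refine hcont.congr (fun q hq => ?_)
  exact hrepr q.1 q.2 (Set.mem_prod.mp hq).1 (Set.mem_prod.mp hq).2

lemma hasDerivAt_gensum {K : ℕ} (b : Fin K → ℝ) (β : Fin K → ℝ) {y : ℝ} (hy : 0 < y) :
    HasDerivAt (fun y' => ∑ i, b i * y' ^ β i) (∑ i, b i * (β i * y ^ (β i - 1))) y := by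
  apply HasDerivAt.fun_sum
  intro i _
  exact (Real.hasDerivAt_rpow_const (Or.inl hy.ne')).const_mul (b i)

/-! ### preconnected regions between graphs -/

lemma preconn_between {V : Set ℝ} (hV : IsPreconnected V) {f g : ℝ → ℝ}
    (hf : ContinuousOn f V) (hg : ContinuousOn g V) (hfg : ∀ x ∈ V, f x < g x) :
    IsPreconnected {q : ℝ × ℝ | q.1 ∈ V ∧ f q.1 < q.2 ∧ q.2 < g q.1} := by
  have hcf : ContinuousOn (fun p : ℝ × ℝ => f p.1) (V ×ˢ Set.Ioo (0:ℝ) 1) :=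
    hf.comp continuous_fst.continuousOn (fun q hq => (Set.mem_prod.mp hq).1)
  have hcg : ContinuousOn (fun p : ℝ × ℝ => g p.1) (V ×ˢ Set.Ioo (0:ℝ) 1) :=
    hg.comp continuous_fst.continuousOn (fun q hq => (Set.mem_prod.mp hq).1)
  have hφ : ContinuousOn (fun p : ℝ × ℝ => (p.1, (1 - p.2) * f p.1 + p.2 * g p.1))
      (V ×ˢ Set.Ioo (0:ℝ) 1) := by
    refine ContinuousOn.prodMk continuous_fst.continuousOn ?_
    exact ((continuousOn_const.sub continuous_snd.continuousOn).mul hcf).add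
      (continuous_snd.continuousOn.mul hcg)
  have himg : {q : ℝ × ℝ | q.1 ∈ V ∧ f q.1 < q.2 ∧ q.2 < g q.1}
      = (fun p : ℝ × ℝ => (p.1, (1 - p.2) * f p.1 + p.2 * g p.1)) ''
          (V ×ˢ Set.Ioo (0:ℝ) 1) := by
    ext q
    constructor
    · rintro ⟨hq1, hq2, hq3⟩
      have hlt : f q.1 < g q.1 := lt_trans hq2 hq3
      have hd : g q.1 - f q.1 > 0 := by linarith
      refine ⟨(q.1, (q.2 - f q.1)/(g q.1 - f q.1)), Set.mem_prod.mpr ⟨hq1, ?_, ?_⟩, ?_⟩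
      · exact div_pos (by linarith) hd
      · rw [div_lt_one hd]; linarith
      · show (q.1, _) = q
        have : (1 - (q.2 - f q.1)/(g q.1 - f q.1)) * f q.1
            + (q.2 - f q.1)/(g q.1 - f q.1) * g q.1 = q.2 := by
          field_simp
          ring
        rw [this]
    · rintro ⟨p, hp, rfl⟩
      obtain ⟨hp1, hp2⟩ := Set.mem_prod.mp hp
      obtain ⟨ht0, ht1⟩ := hp2
      have hlt : f p.1 < g p.1 := hfg p.1 hp1
      refine ⟨hp1, ?_, ?_⟩ <;> simp only <;> nlinarith
  rw [himg]
  exact (hV.prod isPreconnected_Ioo).image _ hφ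

lemma preconn_above {V : Set ℝ} (hV : IsPreconnected V) {f : ℝ → ℝ}
    (hf : ContinuousOn f V) :
    IsPreconnected {q : ℝ × ℝ | q.1 ∈ V ∧ f q.1 < q.2} := by
  have hφ : ContinuousOn (fun p : ℝ × ℝ => (p.1, f p.1 + p.2)) (V ×ˢ Set.Ioi (0:ℝ)) := by
    refine ContinuousOn.prodMk continuous_fst.continuousOn ?_
    exact (hf.comp continuous_fst.continuousOn (fun q hq => (Set.mem_prod.mp hq).1)).add
      continuous_snd.continuousOn
  have himg : {q : ℝ × ℝ | q.1 ∈ V ∧ f q.1 < q.2}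
      = (fun p : ℝ × ℝ => (p.1, f p.1 + p.2)) '' (V ×ˢ Set.Ioi (0:ℝ)) := by
    ext q
    constructor
    · rintro ⟨hq1, hq2⟩
      exact ⟨(q.1, q.2 - f q.1), Set.mem_prod.mpr ⟨hq1, by simp; linarith⟩, by simp⟩
    · rintro ⟨p, hp, rfl⟩
      obtain ⟨hp1, hp2⟩ := Set.mem_prod.mp hp
      have : (0:ℝ) < p.2 := hp2
      exact ⟨hp1, by simp only; linarith⟩
  rw [himg]
  exact (hV.prod isPreconnected_Ioi).image _ hφ

/-- Constant sign of a nonvanishing continuous function on a preconnected set. -/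
lemma sign_const {S : Set (ℝ×ℝ)} (hS : IsPreconnected S) {F : ℝ×ℝ → ℝ}
    (hF : ContinuousOn F S) (hnz : ∀ q ∈ S, F q ≠ 0) {p q : ℝ×ℝ} (hp : p ∈ S) (hq : q ∈ S)
    (hpos : 0 < F p) : 0 < F q := by
  by_contra h
  have hq' : F q < 0 := lt_of_le_of_ne (not_lt.mp h) (hnz q hq)
  obtain ⟨z, hz, hz0⟩ := hS.intermediate_value₂ hq hp hF continuousOn_const
    (le_of_lt hq') (le_of_lt hpos)
  exact hnz z hz hz0

/-- Two strictly increasing enumerations of the same set agree. -/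
lemma enum_eq (s : ℕ) (f g : ℕ → ℝ)
    (hf : ∀ i i', 1 ≤ i → i < i' → i' ≤ s → f i < f i')
    (hg : ∀ i i', 1 ≤ i → i < i' → i' ≤ s → g i < g i')
    (hfg : ∀ i, 1 ≤ i → i ≤ s → ∃ i', 1 ≤ i' ∧ i' ≤ s ∧ f i = g i')
    (hgf : ∀ i, 1 ≤ i → i ≤ s → ∃ i', 1 ≤ i' ∧ i' ≤ s ∧ g i = f i') :
    ∀ i, 1 ≤ i → i ≤ s → f i = g i := by
  intro i
  induction i using Nat.strong_induction_on with
  | _ i IH =>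
    intro h1 h2
    obtain ⟨i', a1, a2, a3⟩ := hfg i h1 h2
    rcases Nat.lt_trichotomy i' i with hlt | rfl | hgt
    · exfalso
      have e1 : f i' = g i' := IH i' hlt a1 (by omega)
      have : f i' < f i := hf i' i a1 hlt h2
      rw [e1, ← a3] at this
      exact lt_irrefl _ this
    · exact a3
    · obtain ⟨i₂, b1, b2, b3⟩ := hgf i h1 h2
      rcases Nat.lt_trichotomy i₂ i with hlt2 | rfl | hgt2
      · exfalso
        have e1 : f i₂ = g i₂ := IH i₂ hlt2 b1 (by omega)
        have : g i₂ < g i := hg i₂ i b1 hlt2 h2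
        rw [← e1, ← b3] at this
        exact lt_irrefl _ this
      · exact b3.symm
      · exfalso
        have c1 : f i < f i₂ := hf i i₂ h1 hgt2 b2
        rw [a3, ← b3] at c1
        have c3 : g i < g i' := hg i i' h1 hgt a2
        exact lt_irrefl _ (lt_trans c1 c3)


set_option maxHeartbeats 1000000 in
/-- Generalized Mahé lemma.  Let `a n` (for `n : Fin N`) be a finite family of
nonzero generalized polynomial functions, given with their unique
representations `a n x y = ∑ i, aa n i x · y ^ β n i` (with `K n` strictly
increasing `y`-exponents and nonzero one-variable generalized polynomial
coefficients), closed under the operations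
(i) `a ↦ ∂a/∂y` if the least `y`-exponent is `0`, resp. `a ↦ y^{-β₁}·a` if not
(for `K > 1`), and (ii) `a ↦ r_a = a − (y/β_K)·∂a/∂y` if the least `y`-exponent
is `0` (for `K > 1`).  Suppose the conclusions of the projection lemma hold for
this family, with subdivision `0 = γ 0 < … < γ L`, root counts `s n p`, root
functions `ξ n p j` (with the convention `ξ n p 0 ≡ 0`), and the uniform
trichotomy.  Then for every `p ≤ L`, every `n`, and every `j ≤ s n p` there is a
sup of infs of finitely many generalized polynomial functions agreeing, on the
half-strip `H p`, with `a n` above the graph of `ξ n p j` and with `0` on or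
below it. -/
theorem generalized_mahe_lemma (N : ℕ) (a : Fin N → ℝ → ℝ → ℝ)
    (K : Fin N → ℕ) (hK : ∀ n, 0 < K n)
    (β : (n : Fin N) → Fin (K n) → ℝ) (hβ : ∀ n, StrictMono (β n))
    (aa : (n : Fin N) → Fin (K n) → ℝ → ℝ)
    (haa : ∀ n i, IsGenPoly1 (aa n i))
    (haanz : ∀ n i, ∃ x : ℝ, 0 < x ∧ aa n i x ≠ 0)
    (ha : ∀ n, ∀ x y : ℝ, 0 < x → 0 < y → a n x y = ∑ i, aa n i x * y ^ β n i)
    -- closure under operation (i):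
    (hclosed₁ : ∀ n, 1 < K n → β n ⟨0, hK n⟩ = 0 →
      ∃ n', ∀ x y : ℝ, 0 < x → 0 < y →
        a n' x y = ∑ i, aa n i x * (β n i * y ^ (β n i - 1)))
    (hclosed₂ : ∀ n, 1 < K n → β n ⟨0, hK n⟩ ≠ 0 →
      ∃ n', ∀ x y : ℝ, 0 < x → 0 < y →
        a n' x y = y ^ (-(β n ⟨0, hK n⟩)) * a n x y)
    -- closure under operation (ii):
    (hclosed₃ : ∀ n, 1 < K n → β n ⟨0, hK n⟩ = 0 →
      ∃ n', ∀ x y : ℝ, 0 < x → 0 < y →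
        a n' x y = a n x y - y / β n ⟨K n - 1, Nat.sub_lt (hK n) one_pos⟩ *
          (∑ i, aa n i x * (β n i * y ^ (β n i - 1))))
    -- conclusions of the projection lemma for this family:
    (L : ℕ) (γ : ℕ → ℝ) (hγ0 : γ 0 = 0) (hγmono : StrictMonoOn γ (Set.Iic L))
    (s : Fin N → ℕ → ℕ) (ξ : Fin N → ℕ → ℕ → ℝ → ℝ)
    (hξzero : ∀ n, ∀ p, ∀ x : ℝ, ξ n p 0 x = 0)
    (hcont : ∀ n, ∀ p ≤ L, ∀ j, 1 ≤ j → j ≤ s n p →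
      ContinuousOn (ξ n p j) (vstrip γ L p))
    (hpos : ∀ n, ∀ p ≤ L, ∀ j, 1 ≤ j → j ≤ s n p →
      ∀ x ∈ vstrip γ L p, 0 < ξ n p j x)
    (hord : ∀ n, ∀ p ≤ L, ∀ j j', 1 ≤ j → j < j' → j' ≤ s n p →
      ∀ x ∈ vstrip γ L p, ξ n p j x < ξ n p j' x)
    (hzero : ∀ n, ∀ p ≤ L, ∀ x ∈ vstrip γ L p, ∀ y : ℝ, 0 < y →
      (a n x y = 0 ↔ ∃ j, 1 ≤ j ∧ j ≤ s n p ∧ y = ξ n p j x))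
    (htri : ∀ n₁ n₂, ∀ p ≤ L, ∀ j₁ j₂, 1 ≤ j₁ → j₁ ≤ s n₁ p → 1 ≤ j₂ → j₂ ≤ s n₂ p →
      (∀ x ∈ vstrip γ L p, ξ n₁ p j₁ x < ξ n₂ p j₂ x) ∨
      (∀ x ∈ vstrip γ L p, ξ n₁ p j₁ x = ξ n₂ p j₂ x) ∨
      (∀ x ∈ vstrip γ L p, ξ n₂ p j₂ x < ξ n₁ p j₁ x)) :
    ∀ p ≤ L, ∀ n : Fin N, ∀ j ≤ s n p,
      ∃ c : ℝ → ℝ → ℝ, IsSupInf2 c ∧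
        ∀ x ∈ vstrip γ L p, ∀ y : ℝ, 0 < y →
          c x y = if ξ n p j x < y then a n x y else 0 := by
  classical
  -- strips are nonempty, preconnected subsets of (0,∞)
  have hVsub : ∀ p ≤ L, vstrip γ L p ⊆ Set.Ioi (0:ℝ) := by
    intro p hp x hx
    have h0 : γ 0 ≤ γ p :=
      hγmono.monotoneOn (Set.mem_Iic.mpr (Nat.zero_le L)) (Set.mem_Iic.mpr hp) (Nat.zero_le p)
    rw [hγ0] at h0
    rw [vstrip] at hx
    by_cases hpL : p = L
    · rw [if_pos hpL] at hx; exact lt_of_le_of_lt h0 hx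
    · rw [if_neg hpL] at hx; exact lt_of_le_of_lt h0 hx.1
  have hVne : ∀ p ≤ L, (vstrip γ L p).Nonempty := by
    intro p hp
    rw [vstrip]
    by_cases hpL : p = L
    · rw [if_pos hpL]; exact Set.nonempty_Ioi
    · rw [if_neg hpL]
      exact Set.nonempty_Ioo.mpr (hγmono (Set.mem_Iic.mpr hp)
        (Set.mem_Iic.mpr (by omega)) (by omega))
  have hVconn : ∀ p, IsPreconnected (vstrip γ L p) := by
    intro p
    rw [vstrip]
    by_cases hpL : p = L
    · rw [if_pos hpL]; exact isPreconnected_Ioi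
    · rw [if_neg hpL]; exact isPreconnected_Ioo
  -- congruence helpers
  have hGPcongr : ∀ {f g : ℝ → ℝ → ℝ}, IsGenPoly2 f →
      (∀ x y : ℝ, 0 < x → 0 < y → g x y = f x y) → IsGenPoly2 g := by
    rintro f g ⟨m, c, α, h1, h2, h3⟩ hfg
    exact ⟨m, c, α, h1, h2, fun x y hx hy => (hfg x y hx hy).trans (h3 x y hx hy)⟩
  have hSIcongr : ∀ {f g : ℝ → ℝ → ℝ}, IsSupInf2 f →
      (∀ x y : ℝ, 0 < x → 0 < y → g x y = f x y) → IsSupInf2 g := by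
    rintro f g ⟨J, Kk, F, h1, h2⟩ hfg
    exact ⟨J, Kk, F, h1, fun x y hx hy => (hfg x y hx hy).trans (h2 x y hx hy)⟩
  -- each a n is a generalized polynomial, hence sup-inf
  have hGP1 : ∀ n i, IsGenPoly2 (fun x y => aa n i x * y ^ β n i) := by
    intro n i
    obtain ⟨m, c, α, hc, hinj, hrepr⟩ := haa n i
    refine isGenPoly2_of_repr m c (fun l => (α l, β n i)) ?_
    intro x y hx hy
    simp only
    rw [hrepr x hx, Finset.sum_mul]
  have hGP : ∀ n, IsGenPoly2 (a n) := by
    intro n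
    refine hGPcongr (isGenPoly2_sum (fun i => fun x y => aa n i x * y ^ β n i) (hGP1 n)) ?_
    intro x y hx hy
    exact ha n x y hx hy
  -- continuity
  have haaC : ∀ n i, ContinuousOn (aa n i) (Set.Ioi (0:ℝ)) :=
    fun n i => IsGenPoly1.continuousOn_pos (haa n i)
  have hContA : ∀ n, ContinuousOn (fun q : ℝ × ℝ => a n q.1 q.2)
      (Set.Ioi (0:ℝ) ×ˢ Set.Ioi (0:ℝ)) :=
    fun n => continuousOn_quad (fun i => haaC n i) (ha n)
  -- derivative in y
  have hDeriv : ∀ n x, 0 < x → ∀ y, 0 < y →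
      HasDerivAt (fun y' => a n x y') (∑ i, aa n i x * (β n i * y ^ (β n i - 1))) y := by
    intro n x hx y hy
    have h1 := hasDerivAt_gensum (fun i => aa n i x) (β n) hy
    refine h1.congr_of_eventuallyEq ?_
    filter_upwards [Ioi_mem_nhds hy] with y' hy'
    exact ha n x y' hx hy'
  -- roots really are zeros
  have hxiroot : ∀ n p, p ≤ L → ∀ i, 1 ≤ i → i ≤ s n p → ∀ x ∈ vstrip γ L p,
      a n x (ξ n p i x) = 0 := by
    intro n p hp i h1 h2 x hx
    exact (hzero n p hp x hx _ (hpos n p hp i h1 h2 x hx)).mpr ⟨i, h1, h2, rfl⟩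
  -- weak ordering of the root functions, with the convention ξ _ _ 0 = 0
  have hordle : ∀ n p, p ≤ L → ∀ i i', i ≤ i' → i' ≤ s n p → ∀ x ∈ vstrip γ L p,
      ξ n p i x ≤ ξ n p i' x := by
    intro n p hp i i' hii hi' x hx
    rcases Nat.eq_zero_or_pos i with rfl | hi1
    · rw [hξzero n p x]
      rcases Nat.eq_zero_or_pos i' with rfl | hi'1
      · rw [hξzero n p x]
      · exact le_of_lt (hpos n p hp i' hi'1 hi' x hx)
    · rcases eq_or_lt_of_le hii with rfl | hlt
      · exact le_refl _
      · exact le_of_lt (hord n p hp i i' hi1 hlt hi' x hx)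
  -- trichotomy transfer
  have hcmp_eq : ∀ n₁ n₂ p, p ≤ L → ∀ j₁ j₂, 1 ≤ j₁ → j₁ ≤ s n₁ p → 1 ≤ j₂ → j₂ ≤ s n₂ p →
      ∀ x₀ ∈ vstrip γ L p, ξ n₁ p j₁ x₀ = ξ n₂ p j₂ x₀ →
      ∀ x ∈ vstrip γ L p, ξ n₁ p j₁ x = ξ n₂ p j₂ x := by
    intro n₁ n₂ p hp j₁ j₂ h11 h12 h21 h22 x₀ hx₀ heq x hx
    rcases htri n₁ n₂ p hp j₁ j₂ h11 h12 h21 h22 with h | h | h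
    · exact absurd heq (ne_of_lt (h x₀ hx₀))
    · exact h x hx
    · exact absurd heq.symm (ne_of_lt (h x₀ hx₀))
  have hcmp_lt : ∀ n₁ n₂ p, p ≤ L → ∀ j₁ j₂, 1 ≤ j₁ → j₁ ≤ s n₁ p → 1 ≤ j₂ → j₂ ≤ s n₂ p →
      ∀ x₀ ∈ vstrip γ L p, ξ n₁ p j₁ x₀ < ξ n₂ p j₂ x₀ →
      ∀ x ∈ vstrip γ L p, ξ n₁ p j₁ x < ξ n₂ p j₂ x := by
    intro n₁ n₂ p hp j₁ j₂ h11 h12 h21 h22 x₀ hx₀ hlt x hx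
    rcases htri n₁ n₂ p hp j₁ j₂ h11 h12 h21 h22 with h | h | h
    · exact h x hx
    · exact absurd (h x₀ hx₀) (ne_of_lt hlt)
    · exact absurd (h x₀ hx₀) (not_lt_of_gt hlt)
  -- if there is a root then K n ≥ 2
  have hK2 : ∀ n p, p ≤ L → 1 ≤ s n p → 2 ≤ K n := by
    intro n p hp hs
    by_contra hcon
    have hK1 : K n = 1 := by have := hK n; omega
    obtain ⟨x₀, hx₀⟩ := hVne p hp
    have hx₀pos : (0:ℝ) < x₀ := hVsub p hp hx₀
    have hval : ∀ y : ℝ, 0 < y →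
        a n x₀ y = aa n ⟨0, hK n⟩ x₀ * y ^ β n ⟨0, hK n⟩ := by
      intro y hy
      rw [ha n x₀ y hx₀pos hy]
      refine Finset.sum_eq_single_of_mem (⟨0, hK n⟩ : Fin (K n)) (Finset.mem_univ _) ?_
      intro i _ hne
      exact absurd (Fin.ext (by have := i.isLt; omega)) hne
    have hroot := hxiroot n p hp 1 le_rfl hs x₀ hx₀
    have hposxi := hpos n p hp 1 le_rfl hs x₀ hx₀
    have h0 : aa n ⟨0, hK n⟩ x₀ = 0 := by
      have h1 := hval (ξ n p 1 x₀) hposxi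
      rw [hroot] at h1
      have h2 := (Real.rpow_pos_of_pos hposxi (β n ⟨0, hK n⟩)).ne'
      rcases mul_eq_zero.mp h1.symm with h | h
      · exact h
      · exact absurd h h2
    have hallroot : ∀ y : ℝ, 0 < y → ∃ i, 1 ≤ i ∧ i ≤ s n p ∧ y = ξ n p i x₀ := by
      intro y hy
      exact (hzero n p hp x₀ hx₀ y hy).mp (by rw [hval y hy, h0, zero_mul])
    have hsub2 : Set.Ioi (0:ℝ) ⊆
        ↑((Finset.Icc 1 (s n p)).image (fun i => ξ n p i x₀)) := by
      intro y hy
      obtain ⟨i, h1, h2, h3⟩ := hallroot y hy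
      exact Finset.mem_coe.mpr (Finset.mem_image.mpr ⟨i, Finset.mem_Icc.mpr ⟨h1, h2⟩, h3.symm⟩)
    have hIoi : (Set.Ioi (0:ℝ)).Infinite := Set.Ioi_infinite 0
    exact (hIoi.mono hsub2) (Finset.finite_toSet _)
  -- sign constancy on root-free bands
  have hsign2 : ∀ (m : Fin N) (lo hi : ℝ → ℝ) p, p ≤ L →
      ContinuousOn lo (vstrip γ L p) → ContinuousOn hi (vstrip γ L p) →
      (∀ x ∈ vstrip γ L p, lo x < hi x) →
      (∀ x ∈ vstrip γ L p, ∀ y : ℝ, lo x < y → y < hi x → 0 < y ∧ a m x y ≠ 0) →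
      ∀ x ∈ vstrip γ L p, ∀ x' ∈ vstrip γ L p, ∀ y y' : ℝ,
        lo x < y → y < hi x → lo x' < y' → y' < hi x' →
        (0 < a m x y → 0 < a m x' y') := by
    intro m lo hi p hp hlo hhi hlohi hfree x hx x' hx' y y' h1 h2 h3 h4 hpos0
    have hpre := preconn_between (hVconn p) hlo hhi hlohi
    have hSsub : {q : ℝ × ℝ | q.1 ∈ vstrip γ L p ∧ lo q.1 < q.2 ∧ q.2 < hi q.1}
        ⊆ Set.Ioi (0:ℝ) ×ˢ Set.Ioi (0:ℝ) := by
      rintro q ⟨hq1, hq2, hq3⟩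
      exact Set.mem_prod.mpr ⟨hVsub p hp hq1, (hfree q.1 hq1 q.2 hq2 hq3).1⟩
    have hFc : ContinuousOn (fun q : ℝ × ℝ => a m q.1 q.2)
        {q : ℝ × ℝ | q.1 ∈ vstrip γ L p ∧ lo q.1 < q.2 ∧ q.2 < hi q.1} :=
      (hContA m).mono hSsub
    have hFnz : ∀ q ∈ {q : ℝ × ℝ | q.1 ∈ vstrip γ L p ∧ lo q.1 < q.2 ∧ q.2 < hi q.1},
        a m q.1 q.2 ≠ 0 := fun q hq => (hfree q.1 hq.1 q.2 hq.2.1 hq.2.2).2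
    exact sign_const hpre hFc hFnz (p := (x, y)) (q := (x', y'))
      ⟨hx, h1, h2⟩ ⟨hx', h3, h4⟩ hpos0
  have hsign1 : ∀ (m : Fin N) (lo : ℝ → ℝ) p, p ≤ L →
      ContinuousOn lo (vstrip γ L p) →
      (∀ x ∈ vstrip γ L p, ∀ y : ℝ, lo x < y → 0 < y ∧ a m x y ≠ 0) →
      ∀ x ∈ vstrip γ L p, ∀ x' ∈ vstrip γ L p, ∀ y y' : ℝ,
        lo x < y → lo x' < y' →
        (0 < a m x y → 0 < a m x' y') := by
    intro m lo p hp hlo hfree x hx x' hx' y y' h1 h3 hpos0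
    have hpre := preconn_above (hVconn p) hlo
    have hSsub : {q : ℝ × ℝ | q.1 ∈ vstrip γ L p ∧ lo q.1 < q.2}
        ⊆ Set.Ioi (0:ℝ) ×ˢ Set.Ioi (0:ℝ) := by
      rintro q ⟨hq1, hq2⟩
      exact Set.mem_prod.mpr ⟨hVsub p hp hq1, (hfree q.1 hq1 q.2 hq2).1⟩
    have hFc : ContinuousOn (fun q : ℝ × ℝ => a m q.1 q.2)
        {q : ℝ × ℝ | q.1 ∈ vstrip γ L p ∧ lo q.1 < q.2} := (hContA m).mono hSsub
    have hFnz : ∀ q ∈ {q : ℝ × ℝ | q.1 ∈ vstrip γ L p ∧ lo q.1 < q.2},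
        a m q.1 q.2 ≠ 0 := fun q hq => (hfree q.1 hq.1 q.2 hq.2).2
    exact sign_const hpre hFc hFnz (p := (x, y)) (q := (x', y'))
      ⟨hx, h1⟩ ⟨hx', h3⟩ hpos0
  -- matching of root functions for functions with the same zero sets
  have hmatch : ∀ n n' p, p ≤ L →
      (∀ x ∈ vstrip γ L p, ∀ y : ℝ, 0 < y → (a n x y = 0 ↔ a n' x y = 0)) →
      s n p = s n' p ∧
        ∀ i, 1 ≤ i → i ≤ s n p → ∀ x ∈ vstrip γ L p, ξ n p i x = ξ n' p i x := by
    intro n n' p hp hiff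
    obtain ⟨x₀, hx₀⟩ := hVne p hp
    have hF : ∀ i, 1 ≤ i → i ≤ s n p → ∃ i', 1 ≤ i' ∧ i' ≤ s n' p ∧
        ξ n p i x₀ = ξ n' p i' x₀ := by
      intro i h1 h2
      have hroot := hxiroot n p hp i h1 h2 x₀ hx₀
      have hy := hpos n p hp i h1 h2 x₀ hx₀
      exact (hzero n' p hp x₀ hx₀ _ hy).mp ((hiff x₀ hx₀ _ hy).mp hroot)
    have hG : ∀ i, 1 ≤ i → i ≤ s n' p → ∃ i', 1 ≤ i' ∧ i' ≤ s n p ∧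
        ξ n' p i x₀ = ξ n p i' x₀ := by
      intro i h1 h2
      have hroot := hxiroot n' p hp i h1 h2 x₀ hx₀
      have hy := hpos n' p hp i h1 h2 x₀ hx₀
      exact (hzero n p hp x₀ hx₀ _ hy).mp ((hiff x₀ hx₀ _ hy).mpr hroot)
    have hcard : ∀ (m m' : Fin N), (∀ i, 1 ≤ i → i ≤ s m p → ∃ i', 1 ≤ i' ∧ i' ≤ s m' p ∧
        ξ m p i x₀ = ξ m' p i' x₀) → s m p ≤ s m' p := by
      intro m m' hmap
      have key : (Finset.Icc 1 (s m p)).card ≤ (Finset.Icc 1 (s m' p)).card := by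
        apply Finset.card_le_card_of_injOn
          (fun i => if h : 1 ≤ i ∧ i ≤ s m p then (hmap i h.1 h.2).choose else 0)
        · intro i hi
          rcases Finset.mem_Icc.mp hi with ⟨h1, h2⟩
          dsimp only
          rw [dif_pos ⟨h1, h2⟩]
          obtain ⟨a1, a2, _⟩ := (hmap i h1 h2).choose_spec
          exact Finset.mem_Icc.mpr ⟨a1, a2⟩
        · intro i hi i' hi' hFeq
          rcases Finset.mem_Icc.mp hi with ⟨h1, h2⟩
          rcases Finset.mem_Icc.mp hi' with ⟨h1', h2'⟩
          simp only at hFeq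
          rw [dif_pos (⟨h1, h2⟩ : 1 ≤ i ∧ i ≤ s m p),
            dif_pos (⟨h1', h2'⟩ : 1 ≤ i' ∧ i' ≤ s m p)] at hFeq
          obtain ⟨a1, a2, a3⟩ := (hmap i h1 h2).choose_spec
          obtain ⟨b1, b2, b3⟩ := (hmap i' h1' h2').choose_spec
          by_contra hne
          rcases Nat.lt_or_ge i i' with hlt | hge
          · have hcon := hord m p hp i i' h1 hlt h2' x₀ hx₀
            rw [a3, b3, hFeq] at hcon
            exact lt_irrefl _ hcon
          · have hlt : i' < i := by omega
            have hcon := hord m p hp i' i h1' hlt h2 x₀ hx₀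
            rw [a3, b3, hFeq] at hcon
            exact lt_irrefl _ hcon
      simpa using key
    have hcards : s n p = s n' p := le_antisymm (hcard n n' hF) (hcard n' n hG)
    refine ⟨hcards, ?_⟩
    have heq0 := enum_eq (s n p) (fun i => ξ n p i x₀) (fun i => ξ n' p i x₀)
      (fun i i' h1 h2 h3 => hord n p hp i i' h1 h2 h3 x₀ hx₀)
      (fun i i' h1 h2 h3 => hord n' p hp i i' h1 h2 (by omega) x₀ hx₀)
      (fun i h1 h2 => by
        obtain ⟨i', a1, a2, a3⟩ := hF i h1 h2
        exact ⟨i', a1, by omega, a3⟩)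
      (fun i h1 h2 => by
        obtain ⟨i', a1, a2, a3⟩ := hG i (by omega) (by omega)
        exact ⟨i', a1, a2, a3⟩)
    intro i h1 h2 x hx
    exact hcmp_eq n n' p hp i i h1 h2 h1 (by omega) x₀ hx₀ (heq0 i h1 h2) x hx
  -- main induction on the number of terms
  suffices H : ∀ (M : ℕ), ∀ n : Fin N, K n ≤ M → ∀ p, p ≤ L → ∀ j, j ≤ s n p →
      ∃ c : ℝ → ℝ → ℝ, IsSupInf2 c ∧
        ∀ x ∈ vstrip γ L p, ∀ y : ℝ, 0 < y →
          c x y = if ξ n p j x < y then a n x y else 0 by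
    intro p hp n j hj
    exact H (K n) n le_rfl p hp j hj
  intro M
  induction M with
  | zero => intro n hn; exact absurd hn (by have := hK n; omega)
  | succ M IH =>
    have H0 : ∀ n : Fin N, K n ≤ M + 1 → β n ⟨0, hK n⟩ = 0 → ∀ p, p ≤ L →
        ∀ j, 1 ≤ j → j ≤ s n p →
        ∃ c : ℝ → ℝ → ℝ, IsSupInf2 c ∧
          ∀ x ∈ vstrip γ L p, ∀ y : ℝ, 0 < y →
            c x y = if ξ n p j x < y then a n x y else 0 := by
      intro n hKle hb0 p hp
      obtain ⟨x₀, hx₀⟩ := hVne p hp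
      have hcont' : ∀ j, j ≤ s n p → ContinuousOn (ξ n p j) (vstrip γ L p) := by
        intro j hj
        rcases Nat.eq_zero_or_pos j with rfl | hj1
        · exact continuousOn_const.congr (fun x _ => hξzero n p x)
        · exact hcont n p hp j hj1 hj
      have hlt' : ∀ j, j < s n p → ∀ x ∈ vstrip γ L p, ξ n p j x < ξ n p (j+1) x := by
        intro j hjs x hx
        rcases Nat.eq_zero_or_pos j with rfl | h1
        · rw [hξzero n p x]; exact hpos n p hp 1 le_rfl (by omega) x hx
        · exact hord n p hp j (j+1) h1 (by omega) (by omega) x hx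
      set ref : ℕ → ℝ := fun j =>
        if j < s n p then (ξ n p j x₀ + ξ n p (j+1) x₀)/2 else ξ n p j x₀ + 1 with href
      have hrefband : ∀ j, j ≤ s n p →
          ξ n p j x₀ < ref j ∧ (j < s n p → ref j < ξ n p (j+1) x₀) := by
        intro j hj
        by_cases hjs : j < s n p
        · have hlt := hlt' j hjs x₀ hx₀
          simp only [href, if_pos hjs]
          exact ⟨by linarith, fun _ => by linarith⟩
        · simp only [href, if_neg hjs]
          exact ⟨by linarith, fun h => absurd h hjs⟩
      have hband : ∀ j, j ≤ s n p → ∀ x ∈ vstrip γ L p, ∀ y : ℝ,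
          ξ n p j x < y → (j < s n p → y < ξ n p (j+1) x) → 0 < y ∧ a n x y ≠ 0 := by
        intro j hj x hx y hy1 hy2
        have hy0 : 0 < y := by
          rcases Nat.eq_zero_or_pos j with rfl | h1
          · rw [hξzero n p x] at hy1; exact hy1
          · exact lt_trans (hpos n p hp j h1 hj x hx) hy1
        refine ⟨hy0, ?_⟩
        intro hz
        obtain ⟨i, hi1, hi2, hi3⟩ := (hzero n p hp x hx y hy0).mp hz
        rcases le_or_gt i j with hij | hij
        · have hle := hordle n p hp i j hij hj x hx
          rw [← hi3] at hle; linarith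
        · have hjs : j < s n p := by omega
          have h2 := hy2 hjs
          have hle := hordle n p hp (j+1) i hij hi2 x hx
          rw [← hi3] at hle; linarith
      have hbandsign : ∀ j, j ≤ s n p → ∀ x ∈ vstrip γ L p, ∀ y : ℝ,
          ξ n p j x < y → (j < s n p → y < ξ n p (j+1) x) →
          (0 < a n x y ↔ 0 < a n x₀ (ref j)) := by
        intro j hj x hx y hy1 hy2
        obtain ⟨hr1, hr2⟩ := hrefband j hj
        by_cases hjs : j < s n p
        · have hsig := hsign2 n (ξ n p j) (ξ n p (j+1)) p hp (hcont' j hj)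
            (hcont' (j+1) (by omega)) (fun x' hx' => hlt' j hjs x' hx')
            (fun x' hx' y' ha1 ha2 => hband j hj x' hx' y' ha1 (fun _ => ha2))
          constructor
          · intro h; exact hsig x hx x₀ hx₀ y (ref j) hy1 (hy2 hjs) hr1 (hr2 hjs) h
          · intro h; exact hsig x₀ hx₀ x hx (ref j) y hr1 (hr2 hjs) hy1 (hy2 hjs) h
        · have hsig := hsign1 n (ξ n p j) p hp (hcont' j hj)
            (fun x' hx' y' hy' => hband j hj x' hx' y' hy' (fun hc => absurd hc hjs))
          constructor
          · intro h; exact hsig x hx x₀ hx₀ y (ref j) hy1 hr1 h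
          · intro h; exact hsig x₀ hx₀ x hx (ref j) y hr1 hy1 h
      -- the heart of the construction
      have CONSTRUCT : ∀ j, 1 ≤ j → j ≤ s n p →
          ∀ t' : ℝ → ℝ → ℝ, IsSupInf2 t' →
          (∀ x ∈ vstrip γ L p, ∀ y : ℝ, 0 < y → y ≤ ξ n p j x → t' x y = 0) →
          (∀ x ∈ vstrip γ L p, ∀ y : ℝ, 0 < y → ξ n p j x < y →
            t' x y = a n x y ∨ (t' x y = 0 ∧ (a n x y = 0 ∨
              (0 < a n x y ↔ 0 < a n x₀ (ref j))))) →
          ∃ c : ℝ → ℝ → ℝ, IsSupInf2 c ∧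
            ∀ x ∈ vstrip γ L p, ∀ y : ℝ, 0 < y →
              c x y = if ξ n p j x < y then a n x y else 0 := by
        intro j h1 h2 t' ht'SI hT1 hT2
        have hx₀pos : (0:ℝ) < x₀ := hVsub p hp hx₀
        have hKn2 : 1 < K n := hK2 n p hp (le_trans h1 h2)
        have hβKpos : 0 < β n ⟨K n - 1, Nat.sub_lt (hK n) one_pos⟩ := by
          have := hβ n (show (⟨0, hK n⟩ : Fin (K n)) < ⟨K n - 1, Nat.sub_lt (hK n) one_pos⟩ by
            rw [Fin.lt_def]; simp; omega)
          rw [hb0] at this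
          exact this
        obtain ⟨n₁, hn₁⟩ := hclosed₁ n hKn2 hb0
        obtain ⟨n₂, hn₂⟩ := hclosed₃ n hKn2 hb0
        have hkey : ∀ x y : ℝ, 0 < x → 0 < y →
            a n x y = a n₂ x y + y / β n ⟨K n - 1, Nat.sub_lt (hK n) one_pos⟩ * a n₁ x y := by
          intro x y hx hy
          rw [hn₂ x y hx hy, hn₁ x y hx hy]
          ring
        -- K n₁ = K n₂ = K n - 1
        have eK : (K n - 1) + 1 = K n := by omega
        have hKn₁ : K n₁ = K n - 1 := by
          have hmono : StrictMono (fun i : Fin (K n - 1) => β n (Fin.cast eK i.succ) - 1) := by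
            intro i i' hii
            apply sub_lt_sub_right
            apply hβ n
            rw [Fin.lt_def]
            simp only [Fin.coe_cast, Fin.val_succ]
            exact Nat.succ_lt_succ (Fin.lt_def.mp hii)
          have hnz : ∀ i : Fin (K n - 1), ∃ x : ℝ, 0 < x ∧
              aa n (Fin.cast eK i.succ) x * β n (Fin.cast eK i.succ) ≠ 0 := by
            intro i
            obtain ⟨x, hx, hnzx⟩ := haanz n (Fin.cast eK i.succ)
            refine ⟨x, hx, mul_ne_zero hnzx ?_⟩
            have := hβ n (show (⟨0, hK n⟩ : Fin (K n)) < Fin.cast eK i.succ by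
              rw [Fin.lt_def]; simp)
            rw [hb0] at this
            exact ne_of_gt this
          refine repr_card (hβ n₁).injective hmono.injective (haanz n₁) hnz ?_
          intro x y hx hy
          rw [← ha n₁ x y hx hy, hn₁ x y hx hy]
          have hsum := Equiv.sum_comp (finCongr eK)
            (fun i => aa n i x * (β n i * y ^ (β n i - 1)))
          rw [← hsum, Fin.sum_univ_succ]
          have h00 : (finCongr eK (0 : Fin (K n - 1 + 1))) = (⟨0, hK n⟩ : Fin (K n)) := by
            apply Fin.ext; simp
          rw [h00, hb0]
          simp only [zero_mul, mul_zero, zero_add]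
          refine Finset.sum_congr rfl (fun i _ => ?_)
          have : finCongr eK i.succ = Fin.cast eK i.succ := rfl
          rw [this]
          ring
        have hKn₂ : K n₂ = K n - 1 := by
          have hmono : StrictMono (fun i : Fin (K n - 1) => β n (Fin.cast eK i.castSucc)) := by
            intro i i' hii
            apply hβ n
            rw [Fin.lt_def]
            simp only [Fin.coe_cast, Fin.coe_castSucc]
            exact Fin.lt_def.mp hii
          have hltK : ∀ i : Fin (K n - 1),
              β n (Fin.cast eK i.castSucc) < β n ⟨K n - 1, Nat.sub_lt (hK n) one_pos⟩ := by
            intro i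
            apply hβ n
            rw [Fin.lt_def]
            simp only [Fin.coe_cast, Fin.coe_castSucc]
            exact i.isLt
          have hnz : ∀ i : Fin (K n - 1), ∃ x : ℝ, 0 < x ∧
              aa n (Fin.cast eK i.castSucc) x *
                (1 - β n (Fin.cast eK i.castSucc) / β n ⟨K n - 1, Nat.sub_lt (hK n) one_pos⟩)
                  ≠ 0 := by
            intro i
            obtain ⟨x, hx, hnzx⟩ := haanz n (Fin.cast eK i.castSucc)
            refine ⟨x, hx, mul_ne_zero hnzx ?_⟩
            have hq : β n (Fin.cast eK i.castSucc) / β n ⟨K n - 1, Nat.sub_lt (hK n) one_pos⟩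
                < 1 := (div_lt_one hβKpos).mpr (hltK i)
            intro hcon
            rw [sub_eq_zero] at hcon
            rw [← hcon] at hq
            exact lt_irrefl _ hq
          refine repr_card (hβ n₂).injective hmono.injective (haanz n₂) hnz ?_
          intro x y hx hy
          rw [← ha n₂ x y hx hy, hn₂ x y hx hy, ha n x y hx hy]
          rw [Finset.mul_sum, ← Finset.sum_sub_distrib]
          have hterm : ∀ i : Fin (K n),
              aa n i x * y ^ β n i
                - y / β n ⟨K n - 1, Nat.sub_lt (hK n) one_pos⟩
                  * (aa n i x * (β n i * y ^ (β n i - 1)))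
              = aa n i x * (1 - β n i / β n ⟨K n - 1, Nat.sub_lt (hK n) one_pos⟩)
                  * y ^ β n i := by
            intro i
            have hye : y ^ β n i = y ^ (β n i - 1) * y := by
              rw [← Real.rpow_add_one (ne_of_gt hy) (β n i - 1), sub_add_cancel]
            rw [hye]
            field_simp
          rw [Finset.sum_congr rfl (fun i _ => hterm i)]
          have hsum := Equiv.sum_comp (finCongr eK)
            (fun i => aa n i x * (1 - β n i / β n ⟨K n - 1, Nat.sub_lt (hK n) one_pos⟩)
              * y ^ β n i)
          rw [← hsum, Fin.sum_univ_castSucc]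
          have hlast : (finCongr eK (Fin.last (K n - 1)))
              = (⟨K n - 1, Nat.sub_lt (hK n) one_pos⟩ : Fin (K n)) := by
            apply Fin.ext; simp
          rw [hlast, div_self (ne_of_gt hβKpos), sub_self, mul_zero, zero_mul, add_zero]
          rfl
        -- anchor indices
        have ANCHOR : ∀ m : Fin N, ∃ jm, jm ≤ s m p ∧
            (∀ x ∈ vstrip γ L p, ξ m p jm x ≤ ξ n p j x) ∧
            (∀ i, jm < i → i ≤ s m p → ∀ x ∈ vstrip γ L p, ξ n p j x < ξ m p i x) ∧
            ((1 ≤ jm ∧ ∀ x ∈ vstrip γ L p, ξ m p jm x = ξ n p j x) ∨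
             (∀ x ∈ vstrip γ L p, ξ m p jm x < ξ n p j x)) := by
          intro m
          by_cases hTne : ((Finset.Icc 1 (s m p)).filter
              (fun i => ξ m p i x₀ ≤ ξ n p j x₀)).Nonempty
          · obtain ⟨hIcc, hjmle⟩ := Finset.mem_filter.mp (Finset.max'_mem _ hTne)
            obtain ⟨hjm1, hjm2⟩ := Finset.mem_Icc.mp hIcc
            refine ⟨Finset.max' _ hTne, hjm2, ?_, ?_, ?_⟩
            · intro x hx
              rcases eq_or_lt_of_le hjmle with he | hl
              · exact le_of_eq (hcmp_eq m n p hp _ j hjm1 hjm2 h1 h2 x₀ hx₀ he x hx)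
              · exact le_of_lt (hcmp_lt m n p hp _ j hjm1 hjm2 h1 h2 x₀ hx₀ hl x hx)
            · intro i hi1 hi2 x hx
              have hnle : ¬ (ξ m p i x₀ ≤ ξ n p j x₀) := by
                intro hle
                have hin : i ∈ (Finset.Icc 1 (s m p)).filter
                    (fun i => ξ m p i x₀ ≤ ξ n p j x₀) :=
                  Finset.mem_filter.mpr ⟨Finset.mem_Icc.mpr ⟨by omega, hi2⟩, hle⟩
                exact absurd (Finset.le_max' _ i hin) (by omega)
              exact hcmp_lt n m p hp j i h1 h2 (by omega) hi2 x₀ hx₀ (not_le.mp hnle) x hx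
            · rcases eq_or_lt_of_le hjmle with he | hl
              · exact Or.inl ⟨hjm1, hcmp_eq m n p hp _ j hjm1 hjm2 h1 h2 x₀ hx₀ he⟩
              · exact Or.inr (hcmp_lt m n p hp _ j hjm1 hjm2 h1 h2 x₀ hx₀ hl)
          · refine ⟨0, Nat.zero_le _, ?_, ?_, ?_⟩
            · intro x hx
              rw [hξzero m p x]
              exact le_of_lt (hpos n p hp j h1 h2 x hx)
            · intro i hi1 hi2 x hx
              have hnle : ¬ (ξ m p i x₀ ≤ ξ n p j x₀) := by
                intro hle
                exact hTne ⟨i, Finset.mem_filter.mpr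
                  ⟨Finset.mem_Icc.mpr ⟨by omega, hi2⟩, hle⟩⟩
              exact hcmp_lt n m p hp j i h1 h2 (by omega) hi2 x₀ hx₀ (not_le.mp hnle) x hx
            · refine Or.inr (fun x hx => ?_)
              rw [hξzero m p x]
              exact hpos n p hp j h1 h2 x hx
        obtain ⟨j₁, hj₁le, hA1₁, hA2₁, hA3₁⟩ := ANCHOR n₁
        obtain ⟨j₂, hj₂le, hA1₂, hA2₂, hA3₂⟩ := ANCHOR n₂
        -- truncations of a n₁ and a n₂ from the induction hypothesis
        obtain ⟨A, hA_SI, hAval⟩ := IH n₁ (by omega) p hp j₁ hj₁le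
        obtain ⟨R, hR_SI, hRval⟩ := IH n₂ (by omega) p hp j₂ hj₂le
        have hcontm : ∀ m : Fin N, ∀ i, i ≤ s m p →
            ContinuousOn (ξ m p i) (vstrip γ L p) := by
          intro m i hi
          rcases Nat.eq_zero_or_pos i with rfl | hi1
          · exact continuousOn_const.congr (fun x _ => hξzero m p x)
          · exact hcont m p hp i hi1 hi
        have hζ0 : ∀ m : Fin N, ∀ i, i ≤ s m p → ∀ x ∈ vstrip γ L p,
            0 ≤ ξ m p i x := by
          intro m i hi x hx
          rcases Nat.eq_zero_or_pos i with rfl | hi1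
          · rw [hξzero m p x]
          · exact le_of_lt (hpos m p hp i hi1 hi x hx)
        set βK := β n ⟨K n - 1, Nat.sub_lt (hK n) one_pos⟩ with hβKdef
        set c₀ : ℝ → ℝ → ℝ := fun x y => R x y + βK⁻¹ * y ^ (1:ℝ) * A x y with hc₀def
        have hc₀eval : ∀ x y : ℝ, c₀ x y = R x y + βK⁻¹ * y ^ (1:ℝ) * A x y := by
          intro x y; rw [hc₀def]
        have hc₀SI : IsSupInf2 c₀ := by
          rw [hc₀def]
          exact isSupInf2_add hR_SI
            (isSupInf2_posMul βK⁻¹ 1 (le_of_lt (inv_pos.mpr hβKpos)) hA_SI)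
        have hAv : ∀ x ∈ vstrip γ L p, ∀ y : ℝ, 0 < y →
            (ξ n₁ p j₁ x < y → A x y = a n₁ x y) ∧ (y ≤ ξ n₁ p j₁ x → A x y = 0) := by
          intro x hx y hy
          refine ⟨fun h => ?_, fun h => ?_⟩
          · rw [hAval x hx y hy, if_pos h]
          · rw [hAval x hx y hy, if_neg (not_lt.mpr h)]
        have hRv : ∀ x ∈ vstrip γ L p, ∀ y : ℝ, 0 < y →
            (ξ n₂ p j₂ x < y → R x y = a n₂ x y) ∧ (y ≤ ξ n₂ p j₂ x → R x y = 0) := by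
          intro x hx y hy
          refine ⟨fun h => ?_, fun h => ?_⟩
          · rw [hRval x hx y hy, if_pos h]
          · rw [hRval x hx y hy, if_neg (not_lt.mpr h)]
        have hc₀top : ∀ x ∈ vstrip γ L p, ∀ y : ℝ, 0 < y → ξ n p j x < y →
            c₀ x y = a n x y := by
          intro x hx y hy hxy
          have hxpos := hVsub p hp hx
          have hA' : ξ n₁ p j₁ x < y := lt_of_le_of_lt (hA1₁ x hx) hxy
          have hR' : ξ n₂ p j₂ x < y := lt_of_le_of_lt (hA1₂ x hx) hxy
          rw [hc₀eval, (hRv x hx y hy).1 hR', (hAv x hx y hy).1 hA', Real.rpow_one,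
            hkey x y hxpos hy]
          ring
        rcases hA3₁ with ⟨hj₁1, hEQ⟩ | hLT
        · -- CASE 1 : the anchor root of the derivative coincides with ξ n p j
          have hroot₁ : ∀ x ∈ vstrip γ L p, a n₁ x (ξ n p j x) = 0 := by
            intro x hx
            have h := hxiroot n₁ p hp j₁ hj₁1 hj₁le x hx
            rwa [hEQ x hx] at h
          have hroot₂ : ∀ x ∈ vstrip γ L p, a n₂ x (ξ n p j x) = 0 := by
            intro x hx
            have hxpos := hVsub p hp hx
            have hypos := hpos n p hp j h1 h2 x hx
            have hk := hkey x (ξ n p j x) hxpos hypos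
            rw [hxiroot n p hp j h1 h2 x hx, hroot₁ x hx, mul_zero, add_zero] at hk
            exact hk.symm
          have hEQ₂ : ∀ x ∈ vstrip γ L p, ξ n₂ p j₂ x = ξ n p j x := by
            have hyp := hpos n p hp j h1 h2 x₀ hx₀
            obtain ⟨i, hi1, hi2, hi3⟩ := (hzero n₂ p hp x₀ hx₀ _ hyp).mp (hroot₂ x₀ hx₀)
            have hile : i ≤ j₂ := by
              by_contra hcon
              have hlt := hA2₂ i (by omega) hi2 x₀ hx₀
              rw [← hi3] at hlt
              exact lt_irrefl _ hlt
            have hji : j₂ = i := by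
              by_contra hcon
              have hlt2 : i < j₂ := by omega
              have hlt := hord n₂ p hp i j₂ hi1 hlt2 hj₂le x₀ hx₀
              rw [← hi3] at hlt
              have hge : ξ n₂ p j₂ x₀ ≤ ξ n p j x₀ := hA1₂ x₀ hx₀
              linarith
            exact hcmp_eq n₂ n p hp j₂ j (by omega) hj₂le h1 h2 x₀ hx₀
              (by rw [hji, ← hi3])
          refine ⟨c₀, hc₀SI, ?_⟩
          intro x hx y hy
          by_cases hxy : ξ n p j x < y
          · rw [if_pos hxy]; exact hc₀top x hx y hy hxy
          · rw [if_neg hxy]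
            have hyle : y ≤ ξ n p j x := not_lt.mp hxy
            rw [hc₀eval, (hRv x hx y hy).2 (by rw [hEQ₂ x hx]; exact hyle),
              (hAv x hx y hy).2 (by rw [hEQ x hx]; exact hyle), mul_zero, add_zero]
        · -- CASE 2 : the anchor root of the derivative lies strictly below ξ n p j
          have hltm : ∀ m : Fin N, ∀ i, i < s m p → ∀ x ∈ vstrip γ L p,
              ξ m p i x < ξ m p (i+1) x := by
            intro m i his x hx
            rcases Nat.eq_zero_or_pos i with rfl | hi1
            · rw [hξzero m p x]; exact hpos m p hp 1 le_rfl (by omega) x hx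
            · exact hord m p hp i (i+1) hi1 (by omega) (by omega) x hx
          have hj1e : j - 1 + 1 = j := by omega
          have hbandex : ∀ x ∈ vstrip γ L p, ξ n p (j-1) x < ξ n p j x := by
            intro x hx
            have := hltm n (j-1) (by omega) x hx
            rwa [hj1e] at this
          -- mean value theorem infrastructure at x₀
          have hder : ∀ yy : ℝ, 0 < yy → HasDerivAt (fun t => a n x₀ t) (a n₁ x₀ yy) yy := by
            intro yy hyypos
            have hd := hDeriv n x₀ hx₀pos yy hyypos
            rwa [← hn₁ x₀ yy hx₀pos hyypos] at hd
          have hcontf : ∀ aN bN : ℝ, 0 < aN →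
              ContinuousOn (fun t => a n x₀ t) (Set.Icc aN bN) := by
            intro aN bN haN t ht
            exact ((hder t (lt_of_lt_of_le haN ht.1)).continuousAt).continuousWithinAt
          -- the graph of ξ n p j lies in the derivative's root-free upper region
          have hUPfree : ∀ x ∈ vstrip γ L p, ∀ y : ℝ, ξ n₁ p j₁ x < y →
              (j₁ < s n₁ p → y < ξ n₁ p (j₁+1) x) → 0 < y ∧ a n₁ x y ≠ 0 := by
            intro x hx y hy1 hy2
            have hy0 : 0 < y := lt_of_le_of_lt (hζ0 n₁ j₁ hj₁le x hx) hy1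
            refine ⟨hy0, ?_⟩
            intro hzz
            obtain ⟨i, hi1, hi2, hi3⟩ := (hzero n₁ p hp x hx y hy0).mp hzz
            rcases le_or_gt i j₁ with hij | hij
            · have hle := hordle n₁ p hp i j₁ hij hj₁le x hx
              rw [← hi3] at hle; linarith
            · have hjs : j₁ < s n₁ p := by omega
              have hle := hordle n₁ p hp (j₁+1) i hij hi2 x hx
              have := hy2 hjs
              rw [← hi3] at hle; linarith
          have hUPj : ∀ x ∈ vstrip γ L p, j₁ < s n₁ p → ξ n p j x < ξ n₁ p (j₁+1) x :=
            fun x hx hjs => hA2₁ (j₁+1) (by omega) (by omega) x hx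
          have hUPiff : ∀ x ∈ vstrip γ L p, ∀ x' ∈ vstrip γ L p, ∀ y y' : ℝ,
              ξ n₁ p j₁ x < y → (j₁ < s n₁ p → y < ξ n₁ p (j₁+1) x) →
              ξ n₁ p j₁ x' < y' → (j₁ < s n₁ p → y' < ξ n₁ p (j₁+1) x') →
              (0 < a n₁ x y ↔ 0 < a n₁ x' y') := by
            intro x hx x' hx' y y' ha1 ha2 hb1 hb2
            by_cases hj₁s : j₁ < s n₁ p
            · have hsig := hsign2 n₁ (ξ n₁ p j₁) (ξ n₁ p (j₁+1)) p hp
                (hcontm n₁ j₁ hj₁le) (hcontm n₁ (j₁+1) (by omega))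
                (fun x'' hx'' => hltm n₁ j₁ hj₁s x'' hx'')
                (fun x'' hx'' y'' u v => hUPfree x'' hx'' y'' u (fun _ => v))
              exact ⟨fun h => hsig x hx x' hx' y y' ha1 (ha2 hj₁s) hb1 (hb2 hj₁s) h,
                fun h => hsig x' hx' x hx y' y hb1 (hb2 hj₁s) ha1 (ha2 hj₁s) h⟩
            · have hsig := hsign1 n₁ (ξ n₁ p j₁) p hp (hcontm n₁ j₁ hj₁le)
                (fun x'' hx'' y'' u => hUPfree x'' hx'' y'' u (fun hc => absurd hc hj₁s))
              exact ⟨fun h => hsig x hx x' hx' y y' ha1 hb1 h,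
                fun h => hsig x' hx' x hx y' y hb1 ha1 h⟩
          -- the lower band is bounded below by the anchor
          have hbandlow : ∀ x ∈ vstrip γ L p, ∀ y : ℝ, ξ n₁ p j₁ x < y →
              ξ n p (j-1) x < y := by
            rcases Nat.eq_or_lt_of_le h1 with hj1' | hj2'
            · intro x hx y hy
              have he : j - 1 = 0 := by omega
              rw [he, hξzero n p x]
              exact lt_of_le_of_lt (hζ0 n₁ j₁ hj₁le x hx) hy
            · have haN : 0 < ξ n p (j-1) x₀ := hpos n p hp (j-1) (by omega) (by omega) x₀ hx₀
              have hab : ξ n p (j-1) x₀ < ξ n p j x₀ := hbandex x₀ hx₀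
              obtain ⟨cy, hcy, hcy0⟩ := exists_hasDerivAt_eq_zero hab
                (hcontf _ _ haN)
                (by show a n x₀ (ξ n p (j-1) x₀) = a n x₀ (ξ n p j x₀)
                    rw [hxiroot n p hp (j-1) (by omega) (by omega) x₀ hx₀,
                      hxiroot n p hp j h1 h2 x₀ hx₀])
                (fun yy hyy => hder yy (lt_trans haN hyy.1))
              have hcypos : 0 < cy := lt_trans haN hcy.1
              obtain ⟨i, hi1, hi2, hi3⟩ := (hzero n₁ p hp x₀ hx₀ cy hcypos).mp hcy0
              have hile : i ≤ j₁ := by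
                by_contra hcon
                have hgt := hA2₁ i (by omega) hi2 x₀ hx₀
                rw [← hi3] at hgt
                exact absurd hcy.2 (not_lt.mpr (le_of_lt hgt))
              have hglob : ∀ x ∈ vstrip γ L p, ξ n p (j-1) x < ξ n₁ p i x :=
                hcmp_lt n n₁ p hp (j-1) i (by omega) (by omega) hi1 hi2 x₀ hx₀
                  (by rw [← hi3]; exact hcy.1)
              intro x hx y hy
              exact lt_trans (lt_of_lt_of_le (hglob x hx)
                (hordle n₁ p hp i j₁ hile hj₁le x hx)) hy
          have hbandJ : ∀ x ∈ vstrip γ L p, ∀ y : ℝ, ξ n p (j-1) x < y → y < ξ n p j x →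
              ((0 < a n x y ↔ 0 < a n x₀ (ref (j-1))) ∧ a n x y ≠ 0) := by
            intro x hx y hy1 hy2
            have hy2' : y < ξ n p (j-1+1) x := by rw [hj1e]; exact hy2
            exact ⟨hbandsign (j-1) (by omega) x hx y hy1 (fun _ => hy2'),
              (hband (j-1) (by omega) x hx y hy1 (fun _ => hy2')).2⟩
          obtain ⟨hrl, hrh0⟩ := hrefband (j-1) (by omega)
          have hrin2 : ref (j-1) < ξ n p j x₀ := by
            have := hrh0 (by omega)
            rwa [hj1e] at this
          have hσnz : a n x₀ (ref (j-1)) ≠ 0 := (hbandJ x₀ hx₀ _ hrl hrin2).2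
          -- sign of the derivative on the upper region, via the MVT from below
          have hA_sign : ∀ x ∈ vstrip γ L p, ∀ y : ℝ, ξ n₁ p j₁ x < y →
              (j₁ < s n₁ p → y < ξ n₁ p (j₁+1) x) →
              (0 < a n x₀ (ref (j-1)) ↔ a n₁ x y < 0) := by
            have hmax : max (ξ n₁ p j₁ x₀) (ξ n p (j-1) x₀) < ξ n p j x₀ :=
              max_lt (hLT x₀ hx₀) (hbandex x₀ hx₀)
            have hy₂1 : ξ n₁ p j₁ x₀ < (max (ξ n₁ p j₁ x₀) (ξ n p (j-1) x₀) + ξ n p j x₀)/2 := by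
              have := le_max_left (ξ n₁ p j₁ x₀) (ξ n p (j-1) x₀); linarith
            have hy₂2 : ξ n p (j-1) x₀ < (max (ξ n₁ p j₁ x₀) (ξ n p (j-1) x₀) + ξ n p j x₀)/2 := by
              have := le_max_right (ξ n₁ p j₁ x₀) (ξ n p (j-1) x₀); linarith
            have hy₂3 : (max (ξ n₁ p j₁ x₀) (ξ n p (j-1) x₀) + ξ n p j x₀)/2 < ξ n p j x₀ := by
              linarith
            have hy₂pos : 0 < (max (ξ n₁ p j₁ x₀) (ξ n p (j-1) x₀) + ξ n p j x₀)/2 :=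
              lt_of_le_of_lt (hζ0 n₁ j₁ hj₁le x₀ hx₀) hy₂1
            obtain ⟨cy, hcy, hcyval⟩ := exists_hasDerivAt_eq_slope
              (fun t => a n x₀ t) (fun t => a n₁ x₀ t) hy₂3 (hcontf _ _ hy₂pos)
              (fun yy hyy => hder yy (lt_trans hy₂pos hyy.1))
            rw [hxiroot n p hp j h1 h2 x₀ hx₀] at hcyval
            have hcyUP1 : ξ n₁ p j₁ x₀ < cy := lt_trans hy₂1 hcy.1
            have hcyUP2 : j₁ < s n₁ p → cy < ξ n₁ p (j₁+1) x₀ :=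
              fun hjs => lt_trans hcy.2 (hUPj x₀ hx₀ hjs)
            have hd : (0:ℝ) < ξ n p j x₀ - (max (ξ n₁ p j₁ x₀) (ξ n p (j-1) x₀) + ξ n p j x₀)/2 := by
              linarith
            have hsgn2 : (0 < a n x₀ (ref (j-1)) ↔ a n₁ x₀ cy < 0) := by
              obtain ⟨hiffb, hnzb⟩ := hbandJ x₀ hx₀ _ hy₂2 hy₂3
              rw [hcyval]
              constructor
              · intro h
                have hpos2 := hiffb.mpr h
                apply div_neg_of_neg_of_pos _ hd
                linarith
              · intro h
                refine hiffb.mp ?_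
                by_contra hc
                have hle : a n x₀ ((max (ξ n₁ p j₁ x₀) (ξ n p (j-1) x₀) + ξ n p j x₀)/2) < 0 :=
                  lt_of_le_of_ne (not_lt.mp hc) hnzb
                have hdp : 0 < (0 - a n x₀ ((max (ξ n₁ p j₁ x₀) (ξ n p (j-1) x₀) + ξ n p j x₀)/2))
                    / (ξ n p j x₀ - (max (ξ n₁ p j₁ x₀) (ξ n p (j-1) x₀) + ξ n p j x₀)/2) :=
                  div_pos (by linarith) hd
                linarith
            intro x hx y hu1 hu2
            have hiffUP := hUPiff x hx x₀ hx₀ y cy hu1 hu2 hcyUP1 hcyUP2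
            have hnzUP := (hUPfree x hx y hu1 hu2).2
            have hnzcy := (hUPfree x₀ hx₀ cy hcyUP1 hcyUP2).2
            constructor
            · intro h
              have hcyneg := hsgn2.mp h
              by_contra hc
              have hgt : 0 < a n₁ x y := lt_of_le_of_ne (not_lt.mp hc) (Ne.symm hnzUP)
              have := hiffUP.mp hgt
              linarith
            · intro h
              have hnn : ¬ (0 < a n₁ x y) := by linarith
              have hcyn : ¬ (0 < a n₁ x₀ cy) := fun hcp => hnn (hiffUP.mpr hcp)
              exact hsgn2.mpr (lt_of_le_of_ne (not_lt.mp hcyn) hnzcy)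
          -- sign of a n₂ between the anchor of a n₁ and ξ n p j
          have hrmid : ∀ x ∈ vstrip γ L p, ∀ y : ℝ, ξ n₁ p j₁ x < y → y < ξ n p j x →
              ((0 < a n₂ x y ↔ 0 < a n x₀ (ref (j-1))) ∧ a n₂ x y ≠ 0) := by
            intro x hx y hy1 hy2
            have hxpos := hVsub p hp hx
            have hy0 : 0 < y := lt_of_le_of_lt (hζ0 n₁ j₁ hj₁le x hx) hy1
            have hUP2 : j₁ < s n₁ p → y < ξ n₁ p (j₁+1) x :=
              fun hjs => lt_trans hy2 (hUPj x hx hjs)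
            have hAiff := hA_sign x hx y hy1 hUP2
            have hAnz := (hUPfree x hx y hy1 hUP2).2
            obtain ⟨hniff, hnnz⟩ := hbandJ x hx y (hbandlow x hx y hy1) hy2
            have hr2 : a n₂ x y = a n x y - y / βK * a n₁ x y := by
              have := hkey x y hxpos hy0; linarith
            have hypos' : 0 < y / βK := div_pos hy0 hβKpos
            by_cases hσ : 0 < a n x₀ (ref (j-1))
            · have h1' : 0 < a n x y := hniff.mpr hσ
              have h2' : a n₁ x y < 0 := hAiff.mp hσ
              have h3' : 0 < a n₂ x y := by rw [hr2]; nlinarith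
              exact ⟨⟨fun _ => hσ, fun _ => h3'⟩, ne_of_gt h3'⟩
            · have h1' : a n x y < 0 :=
                lt_of_le_of_ne (not_lt.mp (fun hc => hσ (hniff.mp hc))) hnnz
              have h2' : 0 < a n₁ x y :=
                lt_of_le_of_ne (not_lt.mp (fun hc => hσ (hAiff.mpr hc))) (Ne.symm hAnz)
              have h3' : a n₂ x y < 0 := by rw [hr2]; nlinarith
              exact ⟨⟨fun hc => absurd h3' (not_lt.mpr (le_of_lt hc)),
                fun hc => absurd hc hσ⟩, ne_of_lt h3'⟩
          -- the anchor of a n₂ lies strictly below ξ n p j …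
          have hζ'ltj : ∀ x ∈ vstrip γ L p, ξ n₂ p j₂ x < ξ n p j x := by
            rcases hA3₂ with ⟨hj₂1, hEQ₂⟩ | h
            · exfalso
              have hxi := hxiroot n₂ p hp j₂ hj₂1 hj₂le x₀ hx₀
              rw [hEQ₂ x₀ hx₀] at hxi
              have hyp := hpos n p hp j h1 h2 x₀ hx₀
              have hAnz := (hUPfree x₀ hx₀ _ (hLT x₀ hx₀) (hUPj x₀ hx₀)).2
              have hk := hkey x₀ (ξ n p j x₀) hx₀pos hyp
              rw [hxiroot n p hp j h1 h2 x₀ hx₀, hxi, zero_add] at hk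
              have hfac : 0 < ξ n p j x₀ / βK := div_pos hyp hβKpos
              exact hAnz ((mul_eq_zero.mp hk.symm).resolve_left (ne_of_gt hfac))
            · exact h
          -- … and below the anchor of a n₁
          have hζ'le : ∀ x ∈ vstrip γ L p, ξ n₂ p j₂ x ≤ ξ n₁ p j₁ x := by
            rcases Nat.eq_zero_or_pos j₂ with rfl | hj₂1
            · intro x hx; rw [hξzero n₂ p x]; exact hζ0 n₁ j₁ hj₁le x hx
            · have hx₀le : ξ n₂ p j₂ x₀ ≤ ξ n₁ p j₁ x₀ := by
                by_contra hc
                have hc' : ξ n₁ p j₁ x₀ < ξ n₂ p j₂ x₀ := not_le.mp hc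
                exact (hrmid x₀ hx₀ _ hc' (hζ'ltj x₀ hx₀)).2
                  (hxiroot n₂ p hp j₂ hj₂1 hj₂le x₀ hx₀)
              rcases Nat.eq_zero_or_pos j₁ with hj₁0 | hj₁1'
              · exfalso
                have hp2 := hpos n₂ p hp j₂ hj₂1 hj₂le x₀ hx₀
                rw [hj₁0, hξzero n₁ p x₀] at hx₀le
                linarith
              · intro x hx
                rcases eq_or_lt_of_le hx₀le with he | hl
                · exact le_of_eq
                    (hcmp_eq n₂ n₁ p hp j₂ j₁ hj₂1 hj₂le hj₁1' hj₁le x₀ hx₀ he x hx)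
                · exact le_of_lt
                    (hcmp_lt n₂ n₁ p hp j₂ j₁ hj₂1 hj₂le hj₁1' hj₁le x₀ hx₀ hl x hx)
          -- root-free region and sign for a n₂
          have hrfree : ∀ x ∈ vstrip γ L p, ∀ y : ℝ, ξ n₂ p j₂ x < y → y < ξ n p j x →
              0 < y ∧ a n₂ x y ≠ 0 := by
            intro x hx y hy1 hy2
            have hy0 : 0 < y := lt_of_le_of_lt (hζ0 n₂ j₂ hj₂le x hx) hy1
            refine ⟨hy0, ?_⟩
            intro hzz
            obtain ⟨i, hi1, hi2, hi3⟩ := (hzero n₂ p hp x hx y hy0).mp hzz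
            rcases le_or_gt i j₂ with hij | hij
            · have hle := hordle n₂ p hp i j₂ hij hj₂le x hx
              rw [← hi3] at hle; linarith
            · have hgt := hA2₂ i hij hi2 x hx
              rw [← hi3] at hgt; linarith
          have hrsign : ∀ x ∈ vstrip γ L p, ∀ y : ℝ, ξ n₂ p j₂ x < y → y < ξ n p j x →
              (0 < a n₂ x y ↔ 0 < a n x₀ (ref (j-1))) := by
            have hsig := hsign2 n₂ (ξ n₂ p j₂) (ξ n p j) p hp (hcontm n₂ j₂ hj₂le)
              (hcontm n j h2) (fun x hx => hζ'ltj x hx) hrfree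
            have hy₃1 : ξ n₁ p j₁ x₀ < (ξ n₁ p j₁ x₀ + ξ n p j x₀)/2 := by
              have := hLT x₀ hx₀; linarith
            have hy₃2 : (ξ n₁ p j₁ x₀ + ξ n p j x₀)/2 < ξ n p j x₀ := by
              have := hLT x₀ hx₀; linarith
            have hy₃1' : ξ n₂ p j₂ x₀ < (ξ n₁ p j₁ x₀ + ξ n p j x₀)/2 :=
              lt_of_le_of_lt (hζ'le x₀ hx₀) hy₃1
            obtain ⟨hmidiff, _⟩ := hrmid x₀ hx₀ _ hy₃1 hy₃2
            intro x hx y hy1 hy2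
            constructor
            · intro h
              exact hmidiff.mp (hsig x hx x₀ hx₀ y _ hy1 hy2 hy₃1' hy₃2 h)
            · intro h
              exact hsig x₀ hx₀ x hx _ y hy₃1' hy₃2 hy1 hy2 (hmidiff.mpr h)
          -- c₀ agrees with a n above the anchor of a n₁
          have hc₀mid : ∀ x ∈ vstrip γ L p, ∀ y : ℝ, 0 < y → ξ n₁ p j₁ x < y →
              c₀ x y = a n x y := by
            intro x hx y hy hy1
            have hxpos := hVsub p hp hx
            rw [hc₀eval, (hRv x hx y hy).1 (lt_of_le_of_lt (hζ'le x hx) hy1),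
              (hAv x hx y hy).1 hy1, Real.rpow_one, hkey x y hxpos hy]
            ring
          -- sign control of c₀ below ξ n p j
          have hc₀low : ∀ x ∈ vstrip γ L p, ∀ y : ℝ, 0 < y → y ≤ ξ n p j x →
              (0 < a n x₀ (ref (j-1)) → 0 ≤ c₀ x y) ∧
              (a n x₀ (ref (j-1)) < 0 → c₀ x y ≤ 0) := by
            intro x hx y hy hyle
            rcases le_or_gt y (ξ n₂ p j₂ x) with hc1 | hc1
            · have hz : c₀ x y = 0 := by
                rw [hc₀eval, (hRv x hx y hy).2 hc1,
                  (hAv x hx y hy).2 (le_trans hc1 (hζ'le x hx)), mul_zero, add_zero]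
              rw [hz]
              exact ⟨fun _ => le_refl 0, fun _ => le_refl 0⟩
            · rcases le_or_gt y (ξ n₁ p j₁ x) with hc2 | hc2
              · have hylt : y < ξ n p j x := lt_of_le_of_lt hc2 (hLT x hx)
                have heq : c₀ x y = a n₂ x y := by
                  rw [hc₀eval, (hRv x hx y hy).1 hc1, (hAv x hx y hy).2 hc2,
                    mul_zero, add_zero]
                rw [heq]
                have hiff := hrsign x hx y hc1 hylt
                constructor
                · intro hσ; exact le_of_lt (hiff.mpr hσ)
                · intro hσ
                  refine not_lt.mp (fun hcp => ?_)
                  have := hiff.mp hcp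
                  linarith
              · rw [hc₀mid x hx y hy hc2]
                rcases eq_or_lt_of_le hyle with he | hylt
                · rw [he, hxiroot n p hp j h1 h2 x hx]
                  exact ⟨fun _ => le_refl 0, fun _ => le_refl 0⟩
                · obtain ⟨hiff, hnz⟩ := hbandJ x hx y (hbandlow x hx y hc2) hylt
                  constructor
                  · intro hσ; exact le_of_lt (hiff.mpr hσ)
                  · intro hσ
                    refine not_lt.mp (fun hcp => ?_)
                    have := hiff.mp hcp
                    linarith
          -- sign of a n above ξ n p j is opposite to the sign below
          have hSGNj : a n x₀ (ref j) ≠ 0 ∧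
              (0 < a n x₀ (ref j) ↔ a n x₀ (ref (j-1)) < 0) := by
            obtain ⟨yy, hyy1, hyyUP2, hyyband⟩ :
                ∃ yy, ξ n p j x₀ < yy ∧ (j₁ < s n₁ p → yy < ξ n₁ p (j₁+1) x₀) ∧
                  (j < s n p → yy < ξ n p (j+1) x₀) := by
              have hu₁gt : ξ n p j x₀ <
                  (if j₁ < s n₁ p then ξ n₁ p (j₁+1) x₀ else ξ n p j x₀ + 2) := by
                by_cases hc : j₁ < s n₁ p
                · rw [if_pos hc]; exact hUPj x₀ hx₀ hc
                · rw [if_neg hc]; linarith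
              have hu₂gt : ξ n p j x₀ <
                  (if j < s n p then ξ n p (j+1) x₀ else ξ n p j x₀ + 2) := by
                by_cases hc : j < s n p
                · rw [if_pos hc]; exact hltm n j hc x₀ hx₀
                · rw [if_neg hc]; linarith
              refine ⟨(ξ n p j x₀ +
                  min (if j₁ < s n₁ p then ξ n₁ p (j₁+1) x₀ else ξ n p j x₀ + 2)
                      (if j < s n p then ξ n p (j+1) x₀ else ξ n p j x₀ + 2))/2, ?_, ?_, ?_⟩
              · have := lt_min hu₁gt hu₂gt; linarith
              · intro hc
                rw [if_pos hc]
                have hle := min_le_left (ξ n₁ p (j₁+1) x₀)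
                  (if j < s n p then ξ n p (j+1) x₀ else ξ n p j x₀ + 2)
                have h2' := lt_min hu₁gt hu₂gt
                rw [if_pos hc] at h2'
                linarith
              · intro hc
                rw [if_pos hc]
                have hle := min_le_right
                  (if j₁ < s n₁ p then ξ n₁ p (j₁+1) x₀ else ξ n p j x₀ + 2)
                  (ξ n p (j+1) x₀)
                have h2' := lt_min hu₁gt hu₂gt
                rw [if_pos hc] at h2'
                linarith
            have hξpos : 0 < ξ n p j x₀ := hpos n p hp j h1 h2 x₀ hx₀
            obtain ⟨cy, hcy, hcyval⟩ := exists_hasDerivAt_eq_slope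
              (fun t => a n x₀ t) (fun t => a n₁ x₀ t) hyy1 (hcontf _ _ hξpos)
              (fun t ht => hder t (lt_trans hξpos ht.1))
            rw [hxiroot n p hp j h1 h2 x₀ hx₀] at hcyval
            have hcyUP1 : ξ n₁ p j₁ x₀ < cy := lt_trans (hLT x₀ hx₀) hcy.1
            have hcyUP2 : j₁ < s n₁ p → cy < ξ n₁ p (j₁+1) x₀ :=
              fun hc => lt_trans hcy.2 (hyyUP2 hc)
            have hAiff := hA_sign x₀ hx₀ cy hcyUP1 hcyUP2
            have hAnz := (hUPfree x₀ hx₀ cy hcyUP1 hcyUP2).2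
            have hd : (0:ℝ) < yy - ξ n p j x₀ := by linarith
            have hyyiff := hbandsign j h2 x₀ hx₀ _ hyy1 hyyband
            have hyynz := (hband j h2 x₀ hx₀ _ hyy1 hyyband).2
            have hrel : (0 < a n x₀ yy ↔ 0 < a n₁ x₀ cy) := by
              rw [hcyval]
              constructor
              · intro h; exact div_pos (by linarith) hd
              · intro h
                by_contra hc
                have h5 : a n x₀ yy < 0 := lt_of_le_of_ne (not_lt.mp hc) hyynz
                have h6 : (a n x₀ yy - 0) / (yy - ξ n p j x₀) < 0 :=
                  div_neg_of_neg_of_pos (by linarith) hd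
                linarith
            have hrefnz : a n x₀ (ref j) ≠ 0 := by
              obtain ⟨hr1, hr2⟩ := hrefband j h2
              exact (hband j h2 x₀ hx₀ (ref j) hr1 hr2).2
            refine ⟨hrefnz, ?_, ?_⟩
            · intro h
              have h6 := hyyiff.mpr h
              have h7 := hrel.mp h6
              have h8 : ¬ (a n₁ x₀ cy < 0) := by linarith
              have h9 : ¬ (0 < a n x₀ (ref (j-1))) := fun hc => h8 (hAiff.mp hc)
              exact lt_of_le_of_ne (not_lt.mp h9) hσnz
            · intro h
              have h9 : ¬ (0 < a n x₀ (ref (j-1))) := by linarith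
              have h8 : ¬ (a n₁ x₀ cy < 0) := fun hc => h9 (hAiff.mpr hc)
              have h7 : 0 < a n₁ x₀ cy := lt_of_le_of_ne (not_lt.mp h8) (Ne.symm hAnz)
              exact hyyiff.mp (hrel.mpr h7)
          -- final assembly
          by_cases hσpos : 0 < a n x₀ (ref (j-1))
          · refine ⟨fun x y => min (c₀ x y) (max 0 (t' x y)),
              isSupInf2_min hc₀SI (isSupInf2_max isSupInf2_zero ht'SI), ?_⟩
            intro x hx y hy
            show min (c₀ x y) (max 0 (t' x y)) = _
            by_cases hxy : ξ n p j x < y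
            · rw [if_pos hxy, hc₀mid x hx y hy (lt_trans (hLT x hx) hxy)]
              refine min_eq_left ?_
              rcases hT2 x hx y hy hxy with ht | ⟨ht0, hcase⟩
              · rw [ht]; exact le_max_right 0 (a n x y)
              · rw [ht0]
                rcases hcase with hz | hiff
                · rw [hz]; exact le_max_left 0 0
                · have h9 : ¬ (0 < a n x₀ (ref j)) := by
                    intro hc; have := hSGNj.2.mp hc; linarith
                  have h8 : a n x y ≤ 0 := not_lt.mp (fun hc => h9 (hiff.mp hc))
                  exact le_trans h8 (le_max_left 0 0)
            · rw [if_neg hxy]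
              have hyle := not_lt.mp hxy
              rw [hT1 x hx y hy hyle, max_self]
              exact min_eq_right ((hc₀low x hx y hy hyle).1 hσpos)
          · have hσneg : a n x₀ (ref (j-1)) < 0 := lt_of_le_of_ne (not_lt.mp hσpos) hσnz
            refine ⟨fun x y => max (c₀ x y) (min 0 (t' x y)),
              isSupInf2_max hc₀SI (isSupInf2_min isSupInf2_zero ht'SI), ?_⟩
            intro x hx y hy
            show max (c₀ x y) (min 0 (t' x y)) = _
            by_cases hxy : ξ n p j x < y
            · rw [if_pos hxy, hc₀mid x hx y hy (lt_trans (hLT x hx) hxy)]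
              refine max_eq_left ?_
              rcases hT2 x hx y hy hxy with ht | ⟨ht0, hcase⟩
              · rw [ht]; exact min_le_right 0 (a n x y)
              · rw [ht0]
                rcases hcase with hz | hiff
                · rw [hz]; exact min_le_left 0 0
                · have h9 : 0 < a n x₀ (ref j) := hSGNj.2.mpr hσneg
                  exact le_trans (min_le_left 0 0) (le_of_lt (hiff.mpr h9))
            · rw [if_neg hxy]
              have hyle := not_lt.mp hxy
              rw [hT1 x hx y hy hyle, min_self]
              exact max_eq_right ((hc₀low x hx y hy hyle).2 hσneg)
      have HD : ∀ d j, 1 ≤ j → j ≤ s n p → s n p - j ≤ d →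
          ∃ c : ℝ → ℝ → ℝ, IsSupInf2 c ∧
            ∀ x ∈ vstrip γ L p, ∀ y : ℝ, 0 < y →
              c x y = if ξ n p j x < y then a n x y else 0 := by
        intro d
        induction d with
        | zero =>
          intro j h1 h2 h3
          have hjs : j = s n p := by omega
          refine CONSTRUCT j h1 h2 (fun _ _ => 0) isSupInf2_zero
            (fun _ _ _ _ _ => rfl) ?_
          intro x hx y hy hlt
          right
          refine ⟨rfl, Or.inr ?_⟩
          exact hbandsign j h2 x hx y hlt (fun hc => absurd hc (by omega))
        | succ d IHd =>
          intro j h1 h2 h3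
          by_cases hjs : j = s n p
          · refine CONSTRUCT j h1 h2 (fun _ _ => 0) isSupInf2_zero
              (fun _ _ _ _ _ => rfl) ?_
            intro x hx y hy hlt
            right
            refine ⟨rfl, Or.inr ?_⟩
            exact hbandsign j h2 x hx y hlt (fun hc => absurd hc (by omega))
          · obtain ⟨t', ht'SI, ht'val⟩ := IHd (j+1) (by omega) (by omega) (by omega)
            refine CONSTRUCT j h1 h2 t' ht'SI ?_ ?_
            · intro x hx y hy hle
              rw [ht'val x hx y hy, if_neg]
              push_neg
              exact le_trans hle (le_of_lt (hlt' j (by omega) x hx))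
            · intro x hx y hy hlt
              rw [ht'val x hx y hy]
              by_cases hc : ξ n p (j+1) x < y
              · rw [if_pos hc]; left; rfl
              · rw [if_neg hc]
                right
                refine ⟨rfl, ?_⟩
                rcases eq_or_lt_of_le (not_lt.mp hc) with he | hl
                · left
                  rw [he]
                  exact hxiroot n p hp (j+1) (by omega) (by omega) x hx
                · exact Or.inr (hbandsign j h2 x hx y hlt (fun _ => hl))
      intro j h1 h2
      exact HD (s n p - j) j h1 h2 le_rfl
    intro n hn p hp j hj
    rcases Nat.eq_zero_or_pos j with rfl | hj1
    · refine ⟨a n, isSupInf2_of_genPoly (hGP n), ?_⟩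
      intro x hx y hy
      rw [hξzero n p x, if_pos hy]
    · by_cases hb0 : β n ⟨0, hK n⟩ = 0
      · exact H0 n hn hb0 p hp j hj1 hj
      · -- reduction to least exponent 0 via hclosed₂
        have hKn2 : 1 < K n := hK2 n p hp (le_trans hj1 hj)
        obtain ⟨nb, hnb⟩ := hclosed₂ n hKn2 hb0
        have hrepr_nb : ∀ x y : ℝ, 0 < x → 0 < y →
            a nb x y = ∑ i, aa n i x * y ^ (β n i - β n ⟨0, hK n⟩) := by
          intro x y hx hy
          rw [hnb x y hx hy, ha n x y hx hy, Finset.mul_sum]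
          refine Finset.sum_congr rfl (fun i _ => ?_)
          rw [sub_eq_add_neg, Real.rpow_add hy]
          ring
        have hmono2 : StrictMono (fun i => β n i - β n ⟨0, hK n⟩) :=
          fun i j h => sub_lt_sub_right (hβ n h) _
        have hnz2 : ∀ i, ∃ x : ℝ, 0 < x ∧ aa n i x ≠ 0 := haanz n
        have heq2 : ∀ x y : ℝ, 0 < x → 0 < y →
            ∑ i, aa nb i x * y ^ β nb i = ∑ i, aa n i x * y ^ (β n i - β n ⟨0, hK n⟩) :=
          fun x y hx hy => (ha nb x y hx hy).symm.trans (hrepr_nb x y hx hy)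
        have hKnb : K nb = K n :=
          repr_card (hβ nb).injective hmono2.injective (haanz nb) hnz2 heq2
        have hb0' : β nb ⟨0, hK nb⟩ = 0 := by
          have := min_exponent_eq (hK nb) (hK n) (β nb) (fun i => β n i - β n ⟨0, hK n⟩)
            (hβ nb) hmono2
            (repr_exponents (hβ nb).injective hmono2.injective (haanz nb) hnz2 heq2)
          rw [this]; exact sub_self _
        have hiffz : ∀ x ∈ vstrip γ L p, ∀ y : ℝ, 0 < y →
            (a n x y = 0 ↔ a nb x y = 0) := by
          intro x hx y hy
          rw [hnb x y (hVsub p hp hx) hy]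
          constructor
          · intro h; rw [h, mul_zero]
          · intro h
            rcases mul_eq_zero.mp h with h' | h'
            · exact absurd h' (Real.rpow_pos_of_pos hy _).ne'
            · exact h'
        have hrm := hmatch n nb p hp hiffz
        obtain ⟨c, hc, hcval⟩ := H0 nb (by omega) hb0' p hp j hj1 (by rw [← hrm.1]; exact hj)
        refine ⟨fun x y => 1 * y ^ β n ⟨0, hK n⟩ * c x y,
          isSupInf2_posMul 1 _ zero_le_one hc, ?_⟩
        intro x hx y hy
        show 1 * y ^ β n ⟨0, hK n⟩ * c x y = _
        rw [hcval x hx y hy]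
        have hxieq : ξ nb p j x = ξ n p j x := (hrm.2 j hj1 hj x hx).symm
        rw [hxieq]
        by_cases hcond : ξ n p j x < y
        · rw [if_pos hcond, if_pos hcond, hnb x y (hVsub p hp hx) hy]
          rw [one_mul, ← mul_assoc, ← Real.rpow_add hy, add_neg_cancel, Real.rpow_zero, one_mul]
        · rw [if_neg hcond, if_neg hcond, mul_zero]
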